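/- arXiv:math/0210023 — 3 statements merged into one kernel-verified Lean document; each statement's English description precedes it below -/
import Mathlib

section
/- Let s ≥ 1 and let τ = τ¹-τ²-⋯-τˢ be a multi-pattern in which each block τʲ is either the pattern 12 (an occurrence at position i means σ(i) < σ(i+1)) or the pattern 21 (σ(i) > σ(i+1)). Then for all k ≥ 1, in ℚ[[x]]: (1 − k·x)·(1 − x)^{k·s}·A_τ(x;k) = (1 − x)^{k·s} − ((1 − x)^k + k·x − 1)^s (equivalently, A_τ(x;k) = (1 − (1 + (k·x − 1)/(1 − x)^k)^s)/(1 − k·x)). -/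
/-- A word `σ : Fin n → Fin k` has an occurrence of the subword pattern `p : Fin m → Fin l`
at position `i` if `i + m ≤ n` and the corresponding letters are order-isomorphic to `p`. -/
def OccursAt {m l n k : ℕ} (p : Fin m → Fin l) (σ : Fin n → Fin k) (i : ℕ) : Prop :=
  ∃ h : i + m ≤ n, ∀ a b : Fin m,
    (σ ⟨i + a, lt_of_lt_of_le (Nat.add_lt_add_left a.isLt i) h⟩ <
      σ ⟨i + b, lt_of_lt_of_le (Nat.add_lt_add_left b.isLt i) h⟩) ↔ p a < p b

/-- `σ` avoids the subword pattern `p`. -/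
def AvoidsPat {m l n k : ℕ} (p : Fin m → Fin l) (σ : Fin n → Fin k) : Prop :=
  ∀ i : ℕ, ¬ OccursAt p σ i

/-- `σ` contains the multi-pattern `τ⁰-τ¹-⋯` (blocks indexed by `Fin s`): there are
positions `i j`, with each block's occurrence ending before the next block's start,
such that `τ j` occurs at `i j` for every `j`. -/
def ContainsMulti {s : ℕ} {m r : Fin s → ℕ} (τ : ∀ j : Fin s, Fin (m j) → Fin (r j))
    {n k : ℕ} (σ : Fin n → Fin k) : Prop :=
  ∃ i : Fin s → ℕ,
    (∀ (j : Fin s) (h : (j : ℕ) + 1 < s), i j + m j ≤ i ⟨(j : ℕ) + 1, h⟩) ∧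
      ∀ j : Fin s, OccursAt (τ j) σ (i j)

/-- The pattern 12 (a strict ascent). -/
def pat12 : Fin 2 → Fin 2 := ![0, 1]

/-- The pattern 21 (a strict descent). -/
def pat21 : Fin 2 → Fin 2 := ![1, 0]

/-- Generating function for the number of `k`-ary words avoiding a multi-pattern. -/
noncomputable def Amulti {s : ℕ} {m r : Fin s → ℕ} (τ : ∀ j : Fin s, Fin (m j) → Fin (r j))
    (k : ℕ) : PowerSeries ℚ :=
  PowerSeries.mk fun n => (Nat.card {σ : Fin n → Fin k // ¬ ContainsMulti τ σ} : ℚ)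

lemma fin_app_congr {n k : ℕ} (σ : Fin n → Fin k) {x y : ℕ} (hx : x < n) (hy : y < n)
    (h : x = y) : σ ⟨x, hx⟩ = σ ⟨y, hy⟩ := by subst h; rfl

lemma occursAt_pat12 {n k : ℕ} (σ : Fin n → Fin k) (i : ℕ) :
    OccursAt pat12 σ i ↔ ∃ h : i + 2 ≤ n, σ ⟨i, by omega⟩ < σ ⟨i + 1, by omega⟩ := by
  constructor
  · rintro ⟨h, hab⟩
    exact ⟨h, (hab 0 1).mpr (by decide)⟩
  · rintro ⟨h, hlt⟩
    refine ⟨h, ?_⟩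
    intro a b
    fin_cases a <;> fin_cases b <;>
      simp [pat12, lt_irrefl] <;>
      first
        | exact hlt
        | exact le_of_lt hlt

lemma occursAt_pat21 {n k : ℕ} (σ : Fin n → Fin k) (i : ℕ) :
    OccursAt pat21 σ i ↔ ∃ h : i + 2 ≤ n, σ ⟨i + 1, by omega⟩ < σ ⟨i, by omega⟩ := by
  constructor
  · rintro ⟨h, hab⟩
    exact ⟨h, (hab 1 0).mpr (by decide)⟩
  · rintro ⟨h, hlt⟩
    refine ⟨h, ?_⟩
    intro a b
    fin_cases a <;> fin_cases b <;>
      simp [pat21, lt_irrefl] <;>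
      first
        | exact hlt
        | exact le_of_lt hlt


lemma app_lt_iff_of_eq {n k : ℕ} (σ : Fin n → Fin k) {x x' y y' : ℕ}
    {hx : x < n} {hx' : x' < n} {hy : y < n} {hy' : y' < n} (h1 : x = x') (h2 : y = y') :
    (σ ⟨x, hx⟩ < σ ⟨y, hy⟩) ↔ (σ ⟨x', hx'⟩ < σ ⟨y', hy'⟩) := by
  subst h1; subst h2; rfl

def wtake {n k : ℕ} (ℓ : ℕ) (h : ℓ ≤ n) (σ : Fin n → Fin k) : Fin ℓ → Fin k :=
  fun a => σ ⟨a, lt_of_lt_of_le a.isLt h⟩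

def wdrop {n k : ℕ} (c : ℕ) (σ : Fin n → Fin k) : Fin (n - c) → Fin k :=
  fun a => σ ⟨c + a, by omega⟩

lemma occursAt_wtake {m l n k : ℕ} (p : Fin m → Fin l) (ℓ : ℕ) (h : ℓ ≤ n)
    (σ : Fin n → Fin k) (i : ℕ) :
    OccursAt p (wtake ℓ h σ) i ↔ i + m ≤ ℓ ∧ OccursAt p σ i := by
  constructor
  · rintro ⟨h2, hab⟩
    exact ⟨h2, ⟨by omega, fun a b => hab a b⟩⟩
  · rintro ⟨h2, ⟨h3, hab⟩⟩
    exact ⟨h2, fun a b => hab a b⟩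

lemma occursAt_wdrop {m l n k : ℕ} (p : Fin m → Fin l) (c : ℕ) (hc : c ≤ n)
    (σ : Fin n → Fin k) (i : ℕ) :
    OccursAt p (wdrop c σ) i ↔ i + m ≤ n - c ∧ OccursAt p σ (c + i) := by
  constructor
  · rintro ⟨h2, hab⟩
    refine ⟨h2, ⟨by omega, fun a b => ?_⟩⟩
    exact Iff.trans (app_lt_iff_of_eq σ (by omega : c + i + (a:ℕ) = c + (i + a))
      (by omega : c + i + (b:ℕ) = c + (i + b))) (hab a b)
  · rintro ⟨h2, ⟨h3, hab⟩⟩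
    refine ⟨h2, fun a b => ?_⟩
    exact Iff.trans (app_lt_iff_of_eq σ (by omega : c + (i + (a:ℕ)) = c + i + a)
      (by omega : c + (i + (b:ℕ)) = c + i + b)) (hab a b)


def wjoin {ℓ n k : ℕ} (h : ℓ ≤ n) (π : Fin ℓ → Fin k) (ρ : Fin (n - ℓ) → Fin k) :
    Fin n → Fin k :=
  fun a => if h' : (a : ℕ) < ℓ then π ⟨a, h'⟩ else ρ ⟨(a : ℕ) - ℓ, by omega⟩

lemma wtake_wjoin {ℓ n k : ℕ} (h : ℓ ≤ n) (π : Fin ℓ → Fin k) (ρ : Fin (n - ℓ) → Fin k) :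
    wtake ℓ h (wjoin h π ρ) = π := by
  funext a
  simp only [wtake, wjoin, a.isLt, dif_pos]

lemma wdrop_wjoin {ℓ n k : ℕ} (h : ℓ ≤ n) (π : Fin ℓ → Fin k) (ρ : Fin (n - ℓ) → Fin k) :
    wdrop ℓ (wjoin h π ρ) = ρ := by
  funext a
  have h1 : ¬ ((⟨ℓ + (a:ℕ), by omega⟩ : Fin n) : ℕ) < ℓ := by simp
  simp only [wdrop, wjoin, h1, dif_neg, not_false_iff]
  congr 1
  exact Fin.ext (by simp)

lemma wjoin_take_drop {ℓ n k : ℕ} (h : ℓ ≤ n) (σ : Fin n → Fin k) :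
    wjoin h (wtake ℓ h σ) (wdrop ℓ σ) = σ := by
  funext a
  by_cases h' : (a : ℕ) < ℓ
  · simp only [wjoin, h', dif_pos, wtake]
  · simp only [wjoin, h', dif_neg, not_false_iff, wdrop]
    exact fin_app_congr σ _ _ (by omega)

lemma card_pred_congr {α : Type*} {P Q : α → Prop} (h : ∀ a, P a ↔ Q a) :
    Nat.card {a // P a} = Nat.card {a // Q a} :=
  Nat.card_congr (Equiv.subtypeEquivRight h)

lemma card_split {n ℓ k : ℕ} (h : ℓ ≤ n) (A : (Fin n → Fin k) → Prop)
    (B : (Fin ℓ → Fin k) → Prop) (C : (Fin (n - ℓ) → Fin k) → Prop)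
    (hA : ∀ σ, A σ ↔ B (wtake ℓ h σ) ∧ C (wdrop ℓ σ)) :
    Nat.card {σ // A σ} = Nat.card {π // B π} * Nat.card {ρ // C ρ} := by
  rw [← Nat.card_prod]
  refine Nat.card_congr ⟨fun σ => (⟨wtake ℓ h σ.1, ((hA σ.1).1 σ.2).1⟩,
      ⟨wdrop ℓ σ.1, ((hA σ.1).1 σ.2).2⟩),
    fun q => ⟨wjoin h q.1.1 q.2.1, (hA _).2
      ⟨by rw [wtake_wjoin]; exact q.1.2, by rw [wdrop_wjoin]; exact q.2.2⟩⟩, ?_, ?_⟩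
  · rintro ⟨σ, hσ⟩
    exact Subtype.ext (wjoin_take_drop h σ)
  · rintro ⟨⟨π, hπ⟩, ⟨ρ, hρ⟩⟩
    refine Prod.ext (Subtype.ext ?_) (Subtype.ext ?_) <;> simp [wtake_wjoin, wdrop_wjoin]

lemma card_pred_split {α : Type*} [Finite α] (P Q : α → Prop) :
    Nat.card {a // P a ∧ Q a} + Nat.card {a // P a ∧ ¬ Q a} = Nat.card {a // P a} := by
  classical
  rw [← Nat.card_sum]
  refine Nat.card_congr ⟨fun q => Sum.elim (fun a => ⟨a.1, a.2.1⟩) (fun a => ⟨a.1, a.2.1⟩) q,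
    fun a => if h : Q a.1 then Sum.inl ⟨a.1, a.2, h⟩ else Sum.inr ⟨a.1, a.2, h⟩, ?_, ?_⟩
  · rintro (⟨a, ha, hq⟩ | ⟨a, ha, hq⟩) <;> simp [hq]
  · rintro ⟨a, ha⟩
    by_cases h : Q a <;> simp [h]

lemma card_partition {α : Type*} [Finite α] (P : α → Prop) (f : α → ℕ) (N : ℕ)
    (hf : ∀ a, P a → f a < N) :
    Nat.card {a // P a} = ∑ ℓ ∈ Finset.range N, Nat.card {a // P a ∧ f a = ℓ} := by
  induction N generalizing P with
  | zero =>
    have : IsEmpty {a // P a} := ⟨fun a => absurd (hf a.1 a.2) (by omega)⟩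
    simp [Nat.card_of_isEmpty]
  | succ N ih =>
    rw [Finset.sum_range_succ, ← card_pred_split P (fun a => f a = N), Nat.add_comm]
    congr 1
    rw [ih (fun a => P a ∧ ¬ f a = N) (fun a ha => by have := hf a ha.1; omega)]
    refine Finset.sum_congr rfl fun ℓ hℓ => card_pred_congr fun a => ?_
    have hℓ' : ℓ < N := Finset.mem_range.mp hℓ
    constructor
    · rintro ⟨⟨h1, _⟩, h3⟩; exact ⟨h1, h3⟩
    · rintro ⟨h1, h2⟩; exact ⟨⟨h1, by omega⟩, h2⟩

/-- `σ` has its unique/first occurrence of `p` at the very end. -/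
def Docc {m l L k : ℕ} (p : Fin m → Fin l) (σ : Fin L → Fin k) : Prop :=
  OccursAt p σ (L - 2) ∧ ∀ i < L - 2, ¬ OccursAt p σ i

noncomputable def wc (k : ℕ) (p : Fin 2 → Fin 2) (n : ℕ) : ℕ :=
  Nat.card {σ : Fin n → Fin k // AvoidsPat p σ}

noncomputable def dc (k : ℕ) (p : Fin 2 → Fin 2) (n : ℕ) : ℕ :=
  Nat.card {σ : Fin n → Fin k // Docc p σ}

lemma wc_zero (k : ℕ) (p : Fin 2 → Fin 2) : wc k p 0 = 1 := by
  have : ∀ σ : Fin 0 → Fin k, AvoidsPat p σ := by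
    rintro σ i ⟨h, -⟩; omega
  haveI : Unique {σ : Fin 0 → Fin k // AvoidsPat p σ} :=
    ⟨⟨⟨Fin.elim0, this _⟩⟩, by rintro ⟨σ, hσ⟩; exact Subtype.ext (funext fun a => a.elim0)⟩
  exact Nat.card_unique

lemma dc_zero (k : ℕ) (p : Fin 2 → Fin 2) : dc k p 0 = 0 := by
  haveI : IsEmpty {σ : Fin 0 → Fin k // Docc p σ} := by
    refine ⟨?_⟩; rintro ⟨σ, ⟨⟨h, -⟩, -⟩⟩; omega
  exact Nat.card_of_isEmpty

lemma dc_add_wc (k : ℕ) (p : Fin 2 → Fin 2) (n : ℕ) :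
    dc k p (n + 1) + wc k p (n + 1) = wc k p n * k := by
  have hle : n ≤ n + 1 := by omega
  have key : Nat.card {σ : Fin (n+1) → Fin k // AvoidsPat p (wtake n hle σ)}
      = wc k p n * k := by
    rw [card_split hle _ (AvoidsPat p) (fun _ => True) (fun σ => by simp)]
    have h2 : Nat.card {ρ : Fin (n + 1 - n) → Fin k // True} = k := by
      rw [card_pred_congr (Q := fun _ => True) (fun a => Iff.rfl),
        Nat.card_congr (Equiv.subtypeUnivEquiv fun _ => trivial), Nat.card_fun]
      simp [show n + 1 - n = 1 by omega]
    rw [h2, wc]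
  rw [← key, ← card_pred_split (fun σ : Fin (n+1) → Fin k => AvoidsPat p (wtake n hle σ))
    (fun σ => OccursAt p σ (n - 1))]
  congr 1
  · refine card_pred_congr fun σ => ?_
    constructor
    · rintro ⟨hocc, hno⟩
      refine ⟨fun i hocc' => ?_, ?_⟩
      · rw [occursAt_wtake] at hocc'
        exact hno i (by omega) hocc'.2
      · rwa [show n + 1 - 2 = n - 1 by omega] at hocc
    · rintro ⟨hA, hocc⟩
      refine ⟨?_, fun i hi hocc' => hA i ?_⟩
      · rwa [show n + 1 - 2 = n - 1 by omega]
      · rw [occursAt_wtake]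
        exact ⟨by omega, hocc'⟩
  · refine card_pred_congr fun σ => ?_
    constructor
    · intro hA
      exact ⟨fun i hocc => hA i ((occursAt_wtake p n hle σ i).mp hocc).2, hA _⟩
    · rintro ⟨hA, hnocc⟩ i hocc
      have hb : i + 2 ≤ n + 1 := hocc.choose
      by_cases hi : i + 2 ≤ n
      · exact hA i ((occursAt_wtake p n hle σ i).mpr ⟨hi, hocc⟩)
      · exact hnocc (by rwa [show n - 1 = i by omega])

lemma occursAt_rev12 {n k : ℕ} (σ : Fin n → Fin k) (i : ℕ) :
    OccursAt pat12 (fun a => (σ a).rev) i ↔ OccursAt pat21 σ i := by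
  rw [occursAt_pat12, occursAt_pat21]
  exact exists_congr fun h => Fin.rev_lt_rev

lemma occursAt_rev21 {n k : ℕ} (σ : Fin n → Fin k) (i : ℕ) :
    OccursAt pat21 (fun a => (σ a).rev) i ↔ OccursAt pat12 σ i := by
  rw [occursAt_pat12, occursAt_pat21]
  exact exists_congr fun h => Fin.rev_lt_rev

lemma wc_rev (k n : ℕ) : wc k pat21 n = wc k pat12 n := by
  refine Nat.card_congr ⟨fun σ => ⟨fun a => (σ.1 a).rev, fun i ho => σ.2 i ?_⟩,
    fun σ => ⟨fun a => (σ.1 a).rev, fun i ho => σ.2 i ?_⟩, ?_, ?_⟩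
  · exact (occursAt_rev12 σ.1 i).mp ho
  · exact (occursAt_rev21 σ.1 i).mp ho
  · rintro ⟨σ, hσ⟩; exact Subtype.ext (funext fun a => Fin.rev_rev _)
  · rintro ⟨σ, hσ⟩; exact Subtype.ext (funext fun a => Fin.rev_rev _)

lemma dc_rev (k n : ℕ) : dc k pat21 n = dc k pat12 n := by
  refine Nat.card_congr ⟨fun σ => ⟨fun a => (σ.1 a).rev,
      (occursAt_rev12 σ.1 _).mpr σ.2.1, fun i hi ho => σ.2.2 i hi ((occursAt_rev12 σ.1 i).mp ho)⟩,
    fun σ => ⟨fun a => (σ.1 a).rev,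
      (occursAt_rev21 σ.1 _).mpr σ.2.1, fun i hi ho => σ.2.2 i hi ((occursAt_rev21 σ.1 i).mp ho)⟩,
    ?_, ?_⟩
  · rintro ⟨σ, hσ⟩; exact Subtype.ext (funext fun a => Fin.rev_rev _)
  · rintro ⟨σ, hσ⟩; exact Subtype.ext (funext fun a => Fin.rev_rev _)

lemma avoid12_le_head {L k : ℕ} (σ : Fin L → Fin k) (h : AvoidsPat pat12 σ)
    (hL : 0 < L) : ∀ j : Fin L, σ j ≤ σ ⟨0, hL⟩ := by
  have key : ∀ t : ℕ, ∀ ht : t < L, σ ⟨t, ht⟩ ≤ σ ⟨0, hL⟩ := by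
    intro t
    induction t with
    | zero => intro ht; exact le_refl _
    | succ t ih =>
      intro ht
      refine le_trans ?_ (ih (by omega))
      have hno := h t
      rw [occursAt_pat12] at hno
      push_neg at hno
      exact hno (by omega)
  intro j
  have := key j.1 j.2
  simpa using this

def consTop {n k : ℕ} (ρ : Fin n → Fin (k+1)) : Fin (n+1) → Fin (k+1) :=
  fun a => if h : (a : ℕ) = 0 then Fin.last k else ρ ⟨(a : ℕ) - 1, by omega⟩

lemma wdrop_avoids {n k : ℕ} {m l : ℕ} (p : Fin m → Fin l) (c : ℕ) (hc : c ≤ n)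
    (σ : Fin n → Fin k) (h : AvoidsPat p σ) : AvoidsPat p (wdrop c σ) :=
  fun i ho => h (c + i) ((occursAt_wdrop p c hc σ i).mp ho).2

lemma consTop_avoids {n k : ℕ} (ρ : Fin n → Fin (k+1)) (hρ : AvoidsPat pat12 ρ) :
    AvoidsPat pat12 (consTop ρ) := by
  intro i ho
  rw [occursAt_pat12] at ho
  obtain ⟨hb, hlt⟩ := ho
  rcases Nat.eq_zero_or_pos i with hi | hi
  · subst hi
    simp only [consTop, dif_pos rfl] at hlt
    exact absurd hlt (by simp [Fin.le_last, not_lt])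
  · have h1 : ¬ (i = 0) := by omega
    have h2 : ¬ (i + 1 = 0) := by omega
    simp only [consTop, h1, h2, dif_neg, not_false_iff] at hlt
    refine hρ (i - 1) ?_
    rw [occursAt_pat12]
    refine ⟨by omega, ?_⟩
    exact (app_lt_iff_of_eq ρ (by omega) (by omega)).mpr hlt

lemma consTop_wdrop {n k : ℕ} (σ : Fin (n+1) → Fin (k+1)) (h0 : σ ⟨0, by omega⟩ = Fin.last k) :
    consTop (wdrop 1 σ) = σ := by
  funext a
  rcases Nat.eq_zero_or_pos (a : ℕ) with ha | ha
  · have : a = ⟨0, by omega⟩ := Fin.ext ha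
    rw [this]
    simp only [consTop, dif_pos]
    exact h0.symm
  · have h1 : ¬ ((a : ℕ) = 0) := by omega
    simp only [consTop, h1, dif_neg, not_false_iff, wdrop]
    exact fin_app_congr σ _ _ (by omega)

lemma wdrop_consTop {n k : ℕ} (ρ : Fin n → Fin (k+1)) : wdrop 1 (consTop ρ) = ρ := by
  funext a
  have h1 : ¬ ((1 + (a : ℕ)) = 0) := by omega
  simp only [wdrop, consTop, h1, dif_neg, not_false_iff]
  exact congrArg ρ (Fin.ext (by simp))

lemma proj_avoids {n k : ℕ} (σ : Fin n → Fin (k+1)) (hb : ∀ a, (σ a : ℕ) < k)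
    (h : AvoidsPat pat12 σ) : AvoidsPat pat12 (fun a => (⟨(σ a : ℕ), hb a⟩ : Fin k)) := by
  intro i ho
  rw [occursAt_pat12] at ho
  obtain ⟨hb', hlt⟩ := ho
  refine h i ?_
  rw [occursAt_pat12]
  rw [Fin.lt_def] at hlt
  exact ⟨hb', hlt⟩

lemma castLE_avoids {n k : ℕ} (σ' : Fin n → Fin k) (h : AvoidsPat pat12 σ') :
    AvoidsPat pat12 (fun a => Fin.castLE (by omega : k ≤ k + 1) (σ' a)) := by
  intro i ho
  rw [occursAt_pat12] at ho
  obtain ⟨hb', hlt⟩ := ho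
  refine h i ?_
  rw [occursAt_pat12]
  rw [Fin.lt_def] at hlt
  exact ⟨hb', hlt⟩

lemma wc_succ (k n : ℕ) :
    wc (k+1) pat12 (n+1) = wc (k+1) pat12 n + wc k pat12 (n+1) := by
  rw [wc, ← card_pred_split (AvoidsPat pat12)
    (fun σ : Fin (n+1) → Fin (k+1) => σ ⟨0, by omega⟩ = Fin.last k)]
  congr 1
  · exact Nat.card_congr
      { toFun := fun σ => ⟨wdrop 1 σ.1, wdrop_avoids pat12 1 (by omega) σ.1 σ.2.1⟩
        invFun := fun ρ => ⟨consTop ρ.1, consTop_avoids ρ.1 ρ.2, by simp [consTop]⟩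
        left_inv := fun σ => Subtype.ext (consTop_wdrop σ.1 σ.2.2)
        right_inv := fun ρ => Subtype.ext (wdrop_consTop ρ.1) }
  · have hbound : ∀ (σ : Fin (n+1) → Fin (k+1)), AvoidsPat pat12 σ →
        ¬ σ ⟨0, by omega⟩ = Fin.last k → ∀ a, (σ a : ℕ) < k := by
      intro σ h1 h2 a
      have hle := avoid12_le_head σ h1 (by omega) a
      have hlt : σ ⟨0, by omega⟩ < Fin.last k := lt_of_le_of_ne (Fin.le_last _) h2
      have := lt_of_le_of_lt hle hlt
      simpa [Fin.lt_def] using this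
    exact Nat.card_congr
      { toFun := fun σ => ⟨fun a => ⟨(σ.1 a : ℕ), hbound σ.1 σ.2.1 σ.2.2 a⟩,
          proj_avoids σ.1 _ σ.2.1⟩
        invFun := fun σ' => ⟨fun a => Fin.castLE (by omega) (σ'.1 a),
          castLE_avoids σ'.1 σ'.2, by
            intro hcontra
            have := congrArg Fin.val hcontra
            simp only [Fin.coe_castLE, Fin.val_last] at this
            exact absurd this (by have := (σ'.1 ⟨0, by omega⟩).2; omega)⟩
        left_inv := fun σ => Subtype.ext (funext fun a => Fin.ext rfl)
        right_inv := fun σ' => Subtype.ext (funext fun a => Fin.ext rfl) }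

open PowerSeries in
lemma coeff_one_sub_CX_mul_zero (r : ℚ) (f : PowerSeries ℚ) :
    coeff 0 ((1 - C r * X) * f) = coeff 0 f := by
  rw [sub_mul, one_mul, mul_assoc, map_sub, coeff_C_mul, coeff_zero_X_mul]
  ring

open PowerSeries in
lemma coeff_one_sub_CX_mul (r : ℚ) (f : PowerSeries ℚ) (n : ℕ) :
    coeff (n+1) ((1 - C r * X) * f) = coeff (n+1) f - r * coeff n f := by
  rw [sub_mul, one_mul, mul_assoc, map_sub, coeff_C_mul, coeff_succ_X_mul]

noncomputable def Wps (k : ℕ) : PowerSeries ℚ := PowerSeries.mk fun n => (wc k pat12 n : ℚ)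
noncomputable def Dps (k : ℕ) : PowerSeries ℚ := PowerSeries.mk fun n => (dc k pat12 n : ℚ)

open PowerSeries in
lemma Wps_inv (k : ℕ) : (1 - X) ^ k * Wps k = 1 := by
  induction k with
  | zero =>
    rw [pow_zero, one_mul]
    ext n
    rw [Wps, coeff_mk]
    cases n with
    | zero => simp [wc_zero]
    | succ n =>
      haveI : IsEmpty {σ : Fin (n+1) → Fin 0 // AvoidsPat pat12 σ} :=
        ⟨fun σ => (σ.1 ⟨0, by omega⟩).elim0⟩
      simp [wc, Nat.card_of_isEmpty]
  | succ k ih =>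
    have hstep : (1 - X) * Wps (k+1) = Wps k := by
      have hC : (1 : PowerSeries ℚ) - X = 1 - C 1 * X := by rw [map_one, one_mul]
      ext n
      cases n with
      | zero =>
        rw [hC, coeff_one_sub_CX_mul_zero]
        simp [Wps, wc_zero]
      | succ n =>
        rw [hC, coeff_one_sub_CX_mul]
        simp only [Wps, coeff_mk, one_mul]
        rw [wc_succ k n]
        push_cast
        ring
    rw [pow_succ, mul_assoc, hstep, ih]

open PowerSeries in
lemma Dps_eq (k : ℕ) : Dps k = 1 - (1 - C (k : ℚ) * X) * Wps k := by
  ext n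
  cases n with
  | zero =>
    rw [map_sub, coeff_one_sub_CX_mul_zero]
    simp [Dps, Wps, dc_zero, wc_zero]
  | succ n =>
    rw [map_sub, coeff_one_sub_CX_mul]
    simp only [Dps, Wps, coeff_mk]
    have h := dc_add_wc k pat12 n
    have : (dc k pat12 (n+1) : ℚ) + wc k pat12 (n+1) = wc k pat12 n * k := by
      exact_mod_cast congrArg (Nat.cast : ℕ → ℚ) h
    have h1 : coeff (n+1) (1 : PowerSeries ℚ) = 0 := by
      simp
    rw [h1]
    linarith

open PowerSeries in
lemma Dps_gf (k : ℕ) :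
    (1 - X) ^ k * Dps k = (1 - X) ^ k + C (k : ℚ) * X - 1 := by
  rw [Dps_eq, mul_sub, mul_one, mul_left_comm, Wps_inv, mul_one]
  ring

lemma contains_nil {n k : ℕ} (τ : Fin 0 → Fin 2 → Fin 2) (σ : Fin n → Fin k) :
    ContainsMulti τ σ :=
  ⟨fun j => j.elim0, fun j => j.elim0, fun j => j.elim0⟩

noncomputable def cc {s : ℕ} (τ : Fin s → Fin 2 → Fin 2) (k n : ℕ) : ℕ :=
  Nat.card {σ : Fin n → Fin k // ContainsMulti τ σ}

lemma chain_lb {s : ℕ} (i : Fin (s+1) → ℕ)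
    (hch : ∀ (j : Fin (s+1)) (h : (j : ℕ) + 1 < s + 1), i j + 2 ≤ i ⟨(j : ℕ) + 1, h⟩) :
    ∀ t : ℕ, ∀ ht : t + 1 < s + 1, i ⟨0, Nat.succ_pos s⟩ + 2 ≤ i ⟨t + 1, ht⟩ := by
  intro t
  induction t with
  | zero => intro ht; exact hch ⟨0, Nat.succ_pos s⟩ ht
  | succ t ih =>
    intro ht
    have h1 := hch ⟨t + 1, by omega⟩ ht
    exact le_trans (ih (by omega)) (le_trans (Nat.le_add_right _ 2) h1)

def stepWitness (s ℓ : ℕ) (i' : Fin s → ℕ) : Fin (s+1) → ℕ :=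
  fun j => if h : (j : ℕ) = 0 then ℓ - 2 else ℓ + i' ⟨(j : ℕ) - 1, by omega⟩

lemma stepWitness_zero {s ℓ : ℕ} {i' : Fin s → ℕ} {j : Fin (s+1)} (hj0 : (j : ℕ) = 0) :
    stepWitness s ℓ i' j = ℓ - 2 := dif_pos hj0

lemma stepWitness_pos {s ℓ : ℕ} {i' : Fin s → ℕ} {j : Fin (s+1)} (hj0 : ¬ (j : ℕ) = 0)
    (h' : (j : ℕ) - 1 < s) :
    stepWitness s ℓ i' j = ℓ + i' ⟨(j : ℕ) - 1, h'⟩ := dif_neg hj0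

lemma step_pred {s n k ℓ : ℕ} (τ : Fin (s+1) → Fin 2 → Fin 2) (hℓn : ℓ ≤ n)
    (σ : Fin n → Fin k) :
    (ContainsMulti τ σ ∧ sInf {q | OccursAt (τ ⟨0, Nat.succ_pos s⟩) σ q} + 2 = ℓ)
      ↔ (Docc (τ ⟨0, Nat.succ_pos s⟩) (wtake ℓ hℓn σ)
          ∧ ContainsMulti (fun j : Fin s => τ j.succ) (wdrop ℓ σ)) := by
  constructor
  · rintro ⟨⟨i, hch, hocc⟩, hf⟩
    have hch2 : ∀ (j : Fin (s+1)) (h : (j : ℕ) + 1 < s + 1),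
        i j + 2 ≤ i ⟨(j : ℕ) + 1, h⟩ := hch
    have hocc0 : OccursAt (τ ⟨0, Nat.succ_pos s⟩) σ (i ⟨0, Nat.succ_pos s⟩) :=
      hocc ⟨0, Nat.succ_pos s⟩
    have hmem : OccursAt (τ ⟨0, Nat.succ_pos s⟩) σ
        (sInf {q | OccursAt (τ ⟨0, Nat.succ_pos s⟩) σ q}) :=
      Nat.sInf_mem ⟨i ⟨0, Nat.succ_pos s⟩,
        show _ ∈ {q | OccursAt (τ ⟨0, Nat.succ_pos s⟩) σ q} from hocc0⟩
    have hb : sInf {q | OccursAt (τ ⟨0, Nat.succ_pos s⟩) σ q} + 2 ≤ n := hmem.choose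
    have h0le : sInf {q | OccursAt (τ ⟨0, Nat.succ_pos s⟩) σ q} ≤ i ⟨0, Nat.succ_pos s⟩ :=
      Nat.sInf_le (show _ ∈ {q | OccursAt (τ ⟨0, Nat.succ_pos s⟩) σ q} from hocc0)
    have h2ℓ : 2 ≤ ℓ := by omega
    have hub : ∀ j : Fin s, ℓ ≤ i j.succ := by
      intro j
      have h1 : i ⟨0, Nat.succ_pos s⟩ + 2 ≤ i ⟨(j : ℕ) + 1, by omega⟩ :=
        chain_lb i hch2 j.1 (by omega)
      have h2 : i ⟨(j : ℕ) + 1, by omega⟩ = i j.succ := rfl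
      omega
    refine ⟨⟨?_, ?_⟩, ?_⟩
    · refine (occursAt_wtake (τ ⟨0, Nat.succ_pos s⟩) ℓ hℓn σ (ℓ - 2)).mpr ⟨by omega, ?_⟩
      rw [show ℓ - 2 = sInf {q | OccursAt (τ ⟨0, Nat.succ_pos s⟩) σ q} by omega]
      exact hmem
    · intro q hq hoccq
      have hqS : sInf {q | OccursAt (τ ⟨0, Nat.succ_pos s⟩) σ q} ≤ q :=
        Nat.sInf_le (show _ ∈ {q | OccursAt (τ ⟨0, Nat.succ_pos s⟩) σ q} from
          ((occursAt_wtake (τ ⟨0, Nat.succ_pos s⟩) ℓ hℓn σ q).mp hoccq).2)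
      omega
    · refine ⟨fun j => i j.succ - ℓ, ?_, ?_⟩
      · intro j hj
        show i j.succ - ℓ + 2 ≤ i ((⟨(j : ℕ) + 1, hj⟩ : Fin s).succ) - ℓ
        have h1 : i j.succ + 2 ≤ i ((⟨(j : ℕ) + 1, hj⟩ : Fin s).succ) :=
          hch j.succ (by simp; omega)
        have h2 := hub j
        have h3 := hub ⟨(j : ℕ) + 1, hj⟩
        omega
      · intro j
        show OccursAt (τ j.succ) (wdrop ℓ σ) (i j.succ - ℓ)
        have hoccj : OccursAt (τ j.succ) σ (i j.succ) := hocc j.succ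
        have hbj : i j.succ + 2 ≤ n := hoccj.choose
        have h2 := hub j
        refine (occursAt_wdrop (τ j.succ) ℓ hℓn σ (i j.succ - ℓ)).mpr ⟨by omega, ?_⟩
        rw [show ℓ + (i j.succ - ℓ) = i j.succ by omega]
        exact hoccj
  · rintro ⟨⟨hD1, hD2⟩, ⟨i', hch', hocc'⟩⟩
    have h2ℓ : 2 ≤ ℓ := by
      obtain ⟨hb', -⟩ := hD1
      omega
    have hocc0 : OccursAt (τ ⟨0, Nat.succ_pos s⟩) σ (ℓ - 2) :=
      ((occursAt_wtake (τ ⟨0, Nat.succ_pos s⟩) ℓ hℓn σ (ℓ - 2)).mp hD1).2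
    have hIocc : ∀ j : Fin (s+1), OccursAt (τ j) σ (stepWitness s ℓ i' j) := by
      intro j
      by_cases hj0 : (j : ℕ) = 0
      · have hj : j = ⟨0, Nat.succ_pos s⟩ := Fin.ext hj0
        rw [hj, stepWitness_zero (by simp)]
        exact hocc0
      · have h' : (j : ℕ) - 1 < s := by have := j.isLt; omega
        rw [stepWitness_pos hj0 h']
        have hw : OccursAt (τ ((⟨(j : ℕ) - 1, h'⟩ : Fin s).succ)) (wdrop ℓ σ)
            (i' ⟨(j : ℕ) - 1, h'⟩) := hocc' ⟨(j : ℕ) - 1, h'⟩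
        have hw2 : OccursAt (τ ((⟨(j : ℕ) - 1, h'⟩ : Fin s).succ)) σ
            (ℓ + i' ⟨(j : ℕ) - 1, h'⟩) :=
          ((occursAt_wdrop _ ℓ hℓn σ _).mp hw).2
        have ej : (⟨(j : ℕ) - 1, h'⟩ : Fin s).succ = j := Fin.ext (by simp; omega)
        rwa [ej] at hw2
    have hIchain : ∀ (j : Fin (s+1)) (hj : (j : ℕ) + 1 < s + 1),
        stepWitness s ℓ i' j + 2 ≤ stepWitness s ℓ i' ⟨(j : ℕ) + 1, hj⟩ := by
      intro j hj
      have e2 : stepWitness s ℓ i' ⟨(j : ℕ) + 1, hj⟩ = ℓ + i' ⟨(j : ℕ), by omega⟩ :=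
        stepWitness_pos (by simp) (by simp; omega)
      rw [e2]
      by_cases hj0 : (j : ℕ) = 0
      · rw [stepWitness_zero hj0]
        omega
      · have h' : (j : ℕ) - 1 < s := by omega
        rw [stepWitness_pos hj0 h']
        have hc : i' ⟨(j : ℕ) - 1, h'⟩ + 2 ≤ i' ⟨(j : ℕ) - 1 + 1, by omega⟩ :=
          hch' ⟨(j : ℕ) - 1, h'⟩ (by simp; omega)
        have e3 : i' ⟨(j : ℕ) - 1 + 1, by omega⟩ = i' ⟨(j : ℕ), by omega⟩ :=
          congrArg i' (Fin.ext (by simp; omega))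
        omega
    have hfin : sInf {q | OccursAt (τ ⟨0, Nat.succ_pos s⟩) σ q} + 2 = ℓ := by
      have hle1 : sInf {q | OccursAt (τ ⟨0, Nat.succ_pos s⟩) σ q} ≤ ℓ - 2 :=
        Nat.sInf_le (show _ ∈ {q | OccursAt (τ ⟨0, Nat.succ_pos s⟩) σ q} from hocc0)
      have hge : ℓ - 2 ≤ sInf {q | OccursAt (τ ⟨0, Nat.succ_pos s⟩) σ q} := by
        refine le_csInf ⟨ℓ - 2, show _ ∈ {q | OccursAt (τ ⟨0, Nat.succ_pos s⟩) σ q}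
          from hocc0⟩ ?_
        intro q hq
        by_contra hcon
        push_neg at hcon
        exact hD2 q (by omega)
          ((occursAt_wtake (τ ⟨0, Nat.succ_pos s⟩) ℓ hℓn σ q).mpr ⟨by omega, hq⟩)
      omega
    exact ⟨⟨stepWitness s ℓ i', hIchain, hIocc⟩, hfin⟩

lemma cc_step {s : ℕ} (τ : Fin (s+1) → Fin 2 → Fin 2) (k n : ℕ) :
    cc τ k n = ∑ p ∈ Finset.HasAntidiagonal.antidiagonal n,
      dc k (τ ⟨0, Nat.succ_pos s⟩) p.1 * cc (fun j : Fin s => τ j.succ) k p.2 := by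
  rw [Finset.Nat.sum_antidiagonal_eq_sum_range_succ_mk, cc,
    card_partition _ (fun σ : Fin n → Fin k =>
      sInf {q | OccursAt (τ ⟨0, Nat.succ_pos s⟩) σ q} + 2) (n + 1) ?hbd]
  case hbd =>
    rintro σ ⟨i, hch, hocc⟩
    have hocc0 : OccursAt (τ ⟨0, Nat.succ_pos s⟩) σ (i ⟨0, Nat.succ_pos s⟩) :=
      hocc ⟨0, Nat.succ_pos s⟩
    have hmem : OccursAt (τ ⟨0, Nat.succ_pos s⟩) σ
        (sInf {q | OccursAt (τ ⟨0, Nat.succ_pos s⟩) σ q}) :=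
      Nat.sInf_mem ⟨i ⟨0, Nat.succ_pos s⟩,
        show _ ∈ {q | OccursAt (τ ⟨0, Nat.succ_pos s⟩) σ q} from hocc0⟩
    have hb : sInf {q | OccursAt (τ ⟨0, Nat.succ_pos s⟩) σ q} + 2 ≤ n := hmem.choose
    show sInf {q | OccursAt (τ ⟨0, Nat.succ_pos s⟩) σ q} + 2 < n + 1
    omega
  refine Finset.sum_congr rfl fun ℓ hℓ => ?_
  have hℓn : ℓ ≤ n := by have := Finset.mem_range.mp hℓ; omega
  rw [card_pred_congr (step_pred τ hℓn)]
  exact card_split hℓn _ _ _ (fun σ => Iff.rfl)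

noncomputable def Cps {s : ℕ} (τ : Fin s → Fin 2 → Fin 2) (k : ℕ) : PowerSeries ℚ :=
  PowerSeries.mk fun n => (cc τ k n : ℚ)

noncomputable def Kps (k : ℕ) : PowerSeries ℚ :=
  PowerSeries.mk fun n => ((k : ℚ)) ^ n

lemma card_add_card_not {α : Type*} [Finite α] (P : α → Prop) :
    Nat.card {a // P a} + Nat.card {a // ¬ P a} = Nat.card α := by
  have h := card_pred_split (fun _ : α => True) P
  rwa [card_pred_congr (fun a => by simp : ∀ a, (True ∧ P a) ↔ P a),
    card_pred_congr (fun a => by simp : ∀ a, (True ∧ ¬ P a) ↔ ¬ P a),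
    Nat.card_congr (Equiv.subtypeUnivEquiv fun _ => trivial)] at h

open PowerSeries in
lemma Kps_inv (k : ℕ) : (1 - C (k : ℚ) * X) * Kps k = 1 := by
  ext n
  cases n with
  | zero => rw [coeff_one_sub_CX_mul_zero]; simp [Kps]
  | succ n =>
    rw [coeff_one_sub_CX_mul]
    simp only [Kps, coeff_mk]
    rw [show coeff (n+1) (1 : PowerSeries ℚ) = 0 by simp]
    ring

open PowerSeries in
lemma Amulti_eq {s : ℕ} (τ : Fin s → Fin 2 → Fin 2) (k : ℕ) :
    Amulti τ k = Kps k - Cps τ k := by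
  ext n
  rw [map_sub]
  simp only [Amulti, Cps, Kps, coeff_mk]
  have h := card_add_card_not (fun σ : Fin n → Fin k => ContainsMulti τ σ)
  have h2 : Nat.card (Fin n → Fin k) = k ^ n := by
    simp [Nat.card_fun]
  rw [h2] at h
  have h3 : (Nat.card {σ : Fin n → Fin k // ContainsMulti τ σ} : ℚ)
      + (Nat.card {σ : Fin n → Fin k // ¬ ContainsMulti τ σ} : ℚ) = (k : ℚ) ^ n := by
    exact_mod_cast congrArg (Nat.cast : ℕ → ℚ) h
  rw [cc]
  linarith [h3]

open PowerSeries in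
lemma Cps_step {s : ℕ} (τ : Fin (s+1) → Fin 2 → Fin 2)
    (hτ : ∀ j, τ j = pat12 ∨ τ j = pat21) (k : ℕ) :
    Cps τ k = Dps k * Cps (fun j : Fin s => τ j.succ) k := by
  have hD : (PowerSeries.mk fun n => (dc k (τ ⟨0, Nat.succ_pos s⟩) n : ℚ)) = Dps k := by
    rcases hτ ⟨0, Nat.succ_pos s⟩ with h | h <;> rw [h]
    · rfl
    · rw [Dps]
      ext n
      simp [dc_rev]
  rw [← hD]
  ext n
  rw [coeff_mul]
  simp only [Cps, coeff_mk]
  rw [cc_step τ k n]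
  push_cast
  rfl

open PowerSeries in
lemma main_ind (k : ℕ) : ∀ (s : ℕ) (τ : Fin s → Fin 2 → Fin 2),
    (∀ j, τ j = pat12 ∨ τ j = pat21) →
    (1 - C (k : ℚ) * X) * Amulti τ k = 1 - (Dps k) ^ s := by
  intro s
  induction s with
  | zero =>
    intro τ hτ
    have hA : Amulti τ k = 0 := by
      ext n
      simp only [Amulti, coeff_mk, map_zero]
      haveI : IsEmpty {σ : Fin n → Fin k // ¬ ContainsMulti τ σ} :=
        ⟨fun σ => σ.2 (contains_nil τ σ.1)⟩
      simp [Nat.card_of_isEmpty]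
    rw [hA, pow_zero, sub_self, mul_zero]
  | succ s ih =>
    intro τ hτ
    have h3 := ih (fun j => τ j.succ) (fun j => hτ j.succ)
    have h4 := Amulti_eq τ k
    have h5 := Amulti_eq (fun j : Fin s => τ j.succ) k
    have h2 := Cps_step τ hτ k
    have h1 := Kps_inv k
    have h6 : (1 - C (k : ℚ) * X) * Cps (fun j : Fin s => τ j.succ) k = (Dps k) ^ s := by
      rw [h5] at h3
      rw [mul_sub] at h3
      rw [h1] at h3
      linear_combination -h3
    rw [h4, mul_sub, h1, h2, mul_left_comm, h6]
    ring

theorem stmt15 (s : ℕ) (hs : 1 ≤ s) (τ : Fin s → Fin 2 → Fin 2)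
    (hτ : ∀ j, τ j = pat12 ∨ τ j = pat21) (k : ℕ) (hk : 1 ≤ k) :
    (1 - (k : PowerSeries ℚ) * PowerSeries.X) * (1 - PowerSeries.X) ^ (k * s) *
        Amulti τ k =
      (1 - PowerSeries.X) ^ (k * s) -
        ((1 - PowerSeries.X) ^ k + (k : PowerSeries ℚ) * PowerSeries.X - 1) ^ s := by
  have hm := main_ind k s τ hτ
  have hD := Dps_gf k
  rw [show ((k : ℕ) : PowerSeries ℚ) = PowerSeries.C (k : ℚ) from
    (map_natCast (PowerSeries.C (R := ℚ)) k).symm]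
  calc (1 - PowerSeries.C (k : ℚ) * PowerSeries.X) * (1 - PowerSeries.X) ^ (k * s) *
        Amulti τ k
      = (1 - PowerSeries.X) ^ (k * s) *
        ((1 - PowerSeries.C (k : ℚ) * PowerSeries.X) * Amulti τ k) := by ring
    _ = (1 - PowerSeries.X) ^ (k * s) * (1 - Dps k ^ s) := by rw [hm]
    _ = (1 - PowerSeries.X) ^ (k * s) - ((1 - PowerSeries.X) ^ k * Dps k) ^ s := by
        rw [mul_pow, ← pow_mul]; ring
    _ = (1 - PowerSeries.X) ^ (k * s) -
        ((1 - PowerSeries.X) ^ k + PowerSeries.C (k : ℚ) * PowerSeries.X - 1) ^ s := by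
        rw [hD]
end

section
/- Let p be a nonempty subword pattern of length m, k ≥ 1, and s ≥ 0. For a word σ of length n let N_p(σ) be the maximum number of pairwise non-overlapping occurrences of p in σ. Then in ℚ[[x]]: Σ_{n≥0} #{σ : Fin n → Fin k | N_p(σ) = s}·xⁿ = A_p(x;k)·((k·x − 1)·A_p(x;k) + 1)^s. -/
/-- `σ` has `t` pairwise non-overlapping occurrences of the subword pattern `p`. -/
def HasNonOverlapping {m l n k : ℕ} (p : Fin m → Fin l) (σ : Fin n → Fin k) (t : ℕ) : Prop :=
  ∃ i : Fin t → ℕ,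
    (∀ (j : Fin t) (h : (j : ℕ) + 1 < t), i j + m ≤ i ⟨(j : ℕ) + 1, h⟩) ∧
      ∀ j : Fin t, OccursAt p σ (i j)

/-- `N_p(σ)`: the maximum number of pairwise non-overlapping occurrences of `p` in `σ`. -/
noncomputable def NOcc {m l n k : ℕ} (p : Fin m → Fin l) (σ : Fin n → Fin k) : ℕ :=
  sSup {t : ℕ | HasNonOverlapping p σ t}

namespace Aux

variable {m l k : ℕ} (p : Fin m → Fin l)

def tk {n : ℕ} (r : ℕ) (h : r ≤ n) (σ : Fin n → Fin k) : Fin r → Fin k :=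
  fun a => σ ⟨a, lt_of_lt_of_le a.isLt h⟩

def dp {n : ℕ} (r : ℕ) (σ : Fin n → Fin k) : Fin (n - r) → Fin k :=
  fun a => σ ⟨r + a, by have := a.isLt; omega⟩

def jn {n : ℕ} (r : ℕ) (β : Fin r → Fin k) (τ : Fin (n - r) → Fin k) : Fin n → Fin k :=
  fun a => if h : (a : ℕ) < r then β ⟨a, h⟩ else τ ⟨(a : ℕ) - r, by have := a.isLt; omega⟩

variable {p}

lemma occursAt_congr {n n' i i' : ℕ} {σ : Fin n → Fin k} {τ : Fin n' → Fin k}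
    (h1 : i + m ≤ n) (h2 : i' + m ≤ n')
    (he : ∀ a : Fin m, σ ⟨i + a, by have := a.isLt; omega⟩ = τ ⟨i' + a, by have := a.isLt; omega⟩) :
    OccursAt p σ i ↔ OccursAt p τ i' := by
  constructor
  · rintro ⟨_, hc⟩
    exact ⟨h2, fun a b => by rw [← he a, ← he b]; exact hc a b⟩
  · rintro ⟨_, hc⟩
    exact ⟨h1, fun a b => by rw [he a, he b]; exact hc a b⟩

lemma occursAt_tk {n r i : ℕ} {h : r ≤ n} {σ : Fin n → Fin k} :
    OccursAt p (tk r h σ) i ↔ (i + m ≤ r ∧ OccursAt p σ i) := by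
  constructor
  · rintro ⟨hb, hc⟩
    exact ⟨hb, (occursAt_congr (σ := tk r h σ) (τ := σ) hb (by omega)
      (fun a => rfl)).mp ⟨hb, hc⟩⟩
  · rintro ⟨hb, ho⟩
    exact (occursAt_congr (σ := tk r h σ) (τ := σ) hb (by omega) (fun a => rfl)).mpr ho

lemma occursAt_dp {n r i : ℕ} {σ : Fin n → Fin k} (hm : 1 ≤ m) :
    OccursAt p (dp r σ) i ↔ OccursAt p σ (r + i) := by
  have he : ∀ (hb : i + m ≤ n - r) (a : Fin m),
      dp (k := k) r σ ⟨i + a, by have := a.isLt; omega⟩ =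
        σ ⟨r + i + a, by have := a.isLt; omega⟩ := by
    intro hb a
    simp only [dp]
    congr 1
    exact Fin.ext (by simp; omega)
  constructor
  · rintro ⟨hb, hc⟩
    exact (occursAt_congr (σ := dp r σ) (τ := σ) hb (by omega) (he hb)).mp ⟨hb, hc⟩
  · rintro ⟨hb, hc⟩
    have hb' : i + m ≤ n - r := by omega
    exact (occursAt_congr (σ := dp r σ) (τ := σ) hb' (by omega) (he hb')).mpr ⟨hb, hc⟩

lemma hno_zero {n : ℕ} {σ : Fin n → Fin k} : HasNonOverlapping p σ 0 :=
  ⟨Fin.elim0, fun j => j.elim0, fun j => j.elim0⟩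

lemma hno_mono {n t t' : ℕ} {σ : Fin n → Fin k} (h : HasNonOverlapping p σ t)
    (h' : t' ≤ t) : HasNonOverlapping p σ t' := by
  obtain ⟨i, hg, ho⟩ := h
  refine ⟨fun j => i ⟨j, by omega⟩, fun j hj => ?_, fun j => ho _⟩
  exact hg ⟨(j : ℕ), by omega⟩ (show (j : ℕ) + 1 < t by omega)

lemma hno_le {n t : ℕ} {σ : Fin n → Fin k} (hm : 1 ≤ m)
    (h : HasNonOverlapping p σ t) : t ≤ n := by
  obtain ⟨i, hg, ho⟩ := h
  have key : ∀ j : ℕ, ∀ hj : j < t, j * m ≤ i ⟨j, hj⟩ := by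
    intro j
    induction j with
    | zero => intro hj; simp
    | succ j ih =>
      intro hj
      have h1 := ih (Nat.lt_of_succ_lt hj)
      have h2 : i ⟨j, Nat.lt_of_succ_lt hj⟩ + m ≤ i ⟨j + 1, hj⟩ :=
        hg ⟨j, Nat.lt_of_succ_lt hj⟩ hj
      have h3 : (j + 1) * m = j * m + m := by ring
      omega
  rcases Nat.eq_zero_or_pos t with ht | ht
  · omega
  · obtain ⟨hb, -⟩ := ho ⟨t - 1, by omega⟩
    have h1 := key (t - 1) (by omega)
    have h2 : (t - 1) * m + m = t * m := by
      have : t - 1 + 1 = t := by omega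
      calc (t - 1) * m + m = (t - 1 + 1) * m := by ring
        _ = t * m := by rw [this]
    have h3 : t * 1 ≤ t * m := Nat.mul_le_mul_left t hm
    omega

lemma nOcc_eq_iff {n t : ℕ} {σ : Fin n → Fin k} (hm : 1 ≤ m) :
    NOcc p σ = t ↔ HasNonOverlapping p σ t ∧ ¬ HasNonOverlapping p σ (t + 1) := by
  have hne : {u : ℕ | HasNonOverlapping p σ u}.Nonempty := ⟨0, hno_zero⟩
  have hbdd : BddAbove {u : ℕ | HasNonOverlapping p σ u} := ⟨n, fun u hu => hno_le hm hu⟩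
  constructor
  · intro h
    constructor
    · rw [← h]; exact Nat.sSup_mem hne hbdd
    · intro hc
      have := le_csSup hbdd hc
      rw [NOcc] at h; omega
  · rintro ⟨h1, h2⟩
    refine le_antisymm (csSup_le hne fun u hu => ?_) (le_csSup hbdd h1)
    by_contra hc
    exact h2 (hno_mono hu (by omega))

lemma nOcc_eq_zero_iff {n : ℕ} {σ : Fin n → Fin k} (hm : 1 ≤ m) :
    NOcc p σ = 0 ↔ AvoidsPat p σ := by
  rw [nOcc_eq_iff hm]
  constructor
  · rintro ⟨-, h2⟩ i hi
    exact h2 ⟨fun _ => i, fun j hj => absurd hj (by omega), fun _ => hi⟩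
  · intro hav
    refine ⟨hno_zero, ?_⟩
    rintro ⟨i, -, ho⟩
    exact hav (i 0) (ho 0)

variable (p)

/-- End position of the first occurrence block. -/
noncomputable def FB {n : ℕ} (σ : Fin n → Fin k) : ℕ :=
  sInf {r | ∃ i, i + m ≤ r ∧ OccursAt p σ i}

lemma FB_spec {n : ℕ} {σ : Fin n → Fin k} (hna : ¬ AvoidsPat p σ) :
    m ≤ FB p σ ∧ FB p σ ≤ n ∧ OccursAt p σ (FB p σ - m) ∧
      ∀ i, OccursAt p σ i → FB p σ ≤ i + m := by
  have hne : {r | ∃ i, i + m ≤ r ∧ OccursAt p σ i}.Nonempty := by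
    simp only [AvoidsPat, not_forall, not_not] at hna
    obtain ⟨i, hi⟩ := hna
    exact ⟨i + m, i, le_rfl, hi⟩
  obtain ⟨i0, hle, hocc⟩ := Nat.sInf_mem hne
  have hmin : ∀ i, OccursAt p σ i → FB p σ ≤ i + m := fun i hi =>
    Nat.sInf_le ⟨i, le_rfl, hi⟩
  have heq : i0 + m = FB p σ := le_antisymm hle (hmin i0 hocc)
  obtain ⟨hb, -⟩ := id hocc
  refine ⟨by omega, by omega, ?_, hmin⟩
  have : FB p σ - m = i0 := by omega
  rw [this]; exact hocc

lemma nOcc_decomp {n : ℕ} {σ : Fin n → Fin k} (hm : 1 ≤ m) (hna : ¬ AvoidsPat p σ) :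
    NOcc p σ = NOcc p (dp (FB p σ) σ) + 1 := by
  obtain ⟨hmf, hfn, hocc, hmin⟩ := FB_spec p hna
  set f := FB p σ with hf
  set t := NOcc p (dp f σ) with ht
  obtain ⟨⟨i, hg, ho⟩, hnot⟩ := (nOcc_eq_iff (p := p) (σ := dp f σ) hm).mp rfl
  rw [nOcc_eq_iff hm]
  constructor
  · -- HasNonOverlapping p σ (t + 1)
    refine ⟨fun j => if h : (j : ℕ) = 0 then f - m
      else f + i ⟨(j : ℕ) - 1, by have := j.isLt; omega⟩, ?_, ?_⟩
    · intro j hj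
      simp only [Fin.val_mk]
      by_cases h0 : (j : ℕ) = 0
      · rw [dif_pos h0, dif_neg (by omega : ¬((j : ℕ) + 1 = 0))]
        have h1 : f - m + m = f := by omega
        exact le_trans (le_of_eq h1) (Nat.le_add_right f _)
      · rw [dif_neg h0, dif_neg (by omega : ¬((j : ℕ) + 1 = 0))]
        have hjlt : (j : ℕ) - 1 + 1 < t := by omega
        have hstep : i ⟨(j : ℕ) - 1, by omega⟩ + m ≤ i ⟨(j : ℕ) - 1 + 1, hjlt⟩ :=
          hg ⟨(j : ℕ) - 1, by omega⟩ hjlt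
        have hval : i ⟨(j : ℕ) - 1 + 1, hjlt⟩ = i ⟨(j : ℕ) + 1 - 1, by omega⟩ :=
          congrArg i (Fin.ext (by simp; omega))
        rw [hval] at hstep
        exact le_trans (le_of_eq (Nat.add_assoc f _ m))
          (Nat.add_le_add_left hstep f)
    · intro j
      beta_reduce
      by_cases h0 : (j : ℕ) = 0
      · rw [dif_pos h0]; exact hocc
      · rw [dif_neg h0]
        exact (occursAt_dp hm).mp (ho ⟨(j : ℕ) - 1, by have := j.isLt; omega⟩)
  · -- ¬ HasNonOverlapping p σ (t + 2)
    rintro ⟨i', hg', ho'⟩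
    apply hnot
    have key : ∀ (x : ℕ) (hx : x < t + 2) (y : ℕ) (hy : y < t + 2), x + 1 = y →
        i' ⟨x, hx⟩ + m ≤ i' ⟨y, hy⟩ := by
      intro x hx y hy hxy
      subst hxy
      exact hg' ⟨x, by omega⟩ hy
    have mono : ∀ (d x : ℕ) (h : x + d < t + 2), i' ⟨x, by omega⟩ ≤ i' ⟨x + d, h⟩ := by
      intro d
      induction d with
      | zero => intro x h; exact le_of_eq rfl
      | succ d ih =>
        intro x h
        have h1 := ih x (by omega)
        have h2 := key (x + d) (by omega) (x + d + 1) (by omega) rfl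
        exact le_trans h1 (le_trans (le_trans (Nat.le_add_right _ m) h2)
          (le_of_eq (congrArg i' (Fin.ext (by simp; omega)))))
    have hfle : ∀ (x : ℕ) (hx : x < t + 2), 1 ≤ x → f ≤ i' ⟨x, hx⟩ := by
      intro x hx h1x
      have ha : f ≤ i' ⟨0, by omega⟩ + m := hmin _ (ho' ⟨0, by omega⟩)
      have hb : i' ⟨0, by omega⟩ + m ≤ i' ⟨1, by omega⟩ :=
        key 0 (by omega) 1 (by omega) rfl
      have hc : i' ⟨1, by omega⟩ ≤ i' ⟨1 + (x - 1), by omega⟩ := mono (x - 1) 1 (by omega)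
      have hd : i' ⟨1 + (x - 1), by omega⟩ = i' ⟨x, hx⟩ :=
        congrArg i' (Fin.ext (by simp; omega))
      exact le_trans (le_trans ha hb) (le_trans hc (le_of_eq hd))
    refine ⟨fun j => i' ⟨(j : ℕ) + 1, by have := j.isLt; omega⟩ - f, ?_, ?_⟩
    · intro j hj
      have hA : f ≤ i' ⟨(j : ℕ) + 1, by have := j.isLt; omega⟩ :=
        hfle _ (by have := j.isLt; omega) (by omega)
      have hAB : i' ⟨(j : ℕ) + 1, by have := j.isLt; omega⟩ + m ≤
          i' ⟨(j : ℕ) + 1 + 1, by omega⟩ :=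
        key _ (by have := j.isLt; omega) _ (by omega) rfl
      exact le_trans (le_of_eq (Nat.sub_add_comm hA).symm)
        (Nat.sub_le_sub_right hAB f)
    · intro j
      have hA : f ≤ i' ⟨(j : ℕ) + 1, by have := j.isLt; omega⟩ :=
        hfle _ (by have := j.isLt; omega) (by omega)
      apply (occursAt_dp hm).mpr
      have hadd : ∀ a b : ℕ, b ≤ a → b + (a - b) = a := fun a b h => by omega
      rw [hadd _ f hA]
      exact ho' _

variable {p}

lemma tk_jn {n r : ℕ} (h : r ≤ n) (β : Fin r → Fin k) (τ : Fin (n - r) → Fin k) :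
    tk r h (jn r β τ) = β := by
  funext a
  simp only [tk, jn, Fin.val_mk]
  rw [dif_pos a.isLt]

lemma dp_jn {n r : ℕ} (β : Fin r → Fin k) (τ : Fin (n - r) → Fin k) :
    dp r (jn r β τ) = τ := by
  funext a
  simp only [dp, jn, Fin.val_mk]
  rw [dif_neg (by omega : ¬(r + (a : ℕ) < r))]
  exact congrArg τ (Fin.ext (by simp))

lemma jn_tk_dp {n r : ℕ} (h : r ≤ n) (σ : Fin n → Fin k) :
    jn r (tk r h σ) (dp r σ) = σ := by
  funext a
  simp only [tk, dp, jn]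
  by_cases ha : (a : ℕ) < r
  · rw [dif_pos ha]
  · rw [dif_neg ha]
    exact congrArg σ (Fin.ext (by simp; omega))

variable (p)

lemma FB_jn {n r : ℕ} (hm : 1 ≤ m) (hr : r ≤ n) {β : Fin r → Fin k}
    {τ : Fin (n - r) → Fin k} (hbna : ¬ AvoidsPat p β)
    (hbmin : ∀ i, OccursAt p β i → r ≤ i + m) :
    ¬ AvoidsPat p (jn r β τ) ∧ FB p (jn r β τ) = r := by
  set σ := jn r β τ with hσ
  have htk : tk r hr σ = β := tk_jn hr β τ
  have hiff : ∀ i, OccursAt p β i ↔ ((i + m ≤ r) ∧ OccursAt p σ i) := by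
    intro i
    rw [← htk]
    exact occursAt_tk
  simp only [AvoidsPat, not_forall, not_not] at hbna
  obtain ⟨i0, hi0⟩ := hbna
  obtain ⟨hb0, ho0⟩ := (hiff i0).mp hi0
  have hna : ¬ AvoidsPat p σ := fun hav => hav i0 ho0
  obtain ⟨hmf, -, hocc, hmin⟩ := FB_spec p hna
  have h1 : FB p σ ≤ r := le_trans (hmin i0 ho0) hb0
  have h2 : r ≤ FB p σ := by
    have hoB : OccursAt p β (FB p σ - m) := (hiff _).mpr ⟨by omega, hocc⟩
    have := hbmin _ hoB
    omega
  exact ⟨hna, by omega⟩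

lemma card_fiber (hm : 1 ≤ m) (n s r : ℕ) (hr : r ≤ n) :
    Nat.card {σ : Fin n → Fin k // NOcc p σ = s + 1 ∧ FB p σ = r} =
      Nat.card {β : Fin r → Fin k // ¬ AvoidsPat p β ∧
          ∀ i, OccursAt p β i → r ≤ i + m} *
        Nat.card {τ : Fin (n - r) → Fin k // NOcc p τ = s} := by
  rw [← Nat.card_prod]
  apply Nat.card_congr
  refine Equiv.mk (fun x => (⟨tk r hr x.1, ?_⟩, ⟨dp r x.1, ?_⟩))
    (fun y => ⟨jn r y.1.1 y.2.1, ?_⟩) ?_ ?_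
  · -- block property
    obtain ⟨σ, hN, hF⟩ := x
    have hna : ¬ AvoidsPat p σ := fun hav => by
      have := (nOcc_eq_zero_iff (p := p) hm).mpr hav
      omega
    obtain ⟨hmf, hfn, hocc, hmin⟩ := FB_spec p hna
    rw [hF] at hmf hocc hmin
    refine ⟨fun hav => hav (r - m) (occursAt_tk.mpr ⟨by omega, hocc⟩), fun i hoi => ?_⟩
    obtain ⟨hb, ho⟩ := occursAt_tk.mp hoi
    exact hmin i ho
  · -- tail NOcc
    obtain ⟨σ, hN, hF⟩ := x
    have hna : ¬ AvoidsPat p σ := fun hav => by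
      have := (nOcc_eq_zero_iff (p := p) hm).mpr hav
      omega
    have hdec := nOcc_decomp p hm hna
    rw [hF] at hdec
    show NOcc p (dp r σ) = s
    omega
  · -- joined word property
    obtain ⟨⟨β, hbna, hbmin⟩, ⟨τ, hτ⟩⟩ := y
    obtain ⟨hna, hFB⟩ := FB_jn p hm hr hbna hbmin (τ := τ)
    show NOcc p (jn r β τ) = s + 1 ∧ FB p (jn r β τ) = r
    refine ⟨?_, hFB⟩
    have hdec := nOcc_decomp p hm hna
    rw [hFB] at hdec
    rw [dp_jn] at hdec
    omega
  · intro x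
    exact Subtype.ext (jn_tk_dp hr x.1)
  · intro y
    exact Prod.ext (Subtype.ext (tk_jn hr y.1.1 y.2.1)) (Subtype.ext (dp_jn y.1.1 y.2.1))

open Finset in
lemma card_sum (hm : 1 ≤ m) (n s : ℕ) :
    Nat.card {σ : Fin n → Fin k // NOcc p σ = s + 1} =
      ∑ r ∈ range (n + 1),
        Nat.card {β : Fin r → Fin k // ¬ AvoidsPat p β ∧
            ∀ i, OccursAt p β i → r ≤ i + m} *
          Nat.card {τ : Fin (n - r) → Fin k // NOcc p τ = s} := by
  classical
  rw [Nat.card_eq_fintype_card, Fintype.card_subtype]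
  rw [Finset.card_eq_sum_card_fiberwise (f := fun σ => FB p σ) (t := range (n + 1)) ?_]
  · refine Finset.sum_congr rfl fun r hr => ?_
    rw [← card_fiber p hm n s r (by simpa using Nat.lt_succ_iff.mp (mem_range.mp hr))]
    rw [Nat.card_eq_fintype_card, Fintype.card_subtype]
    congr 1
    rw [Finset.filter_filter]
  · intro σ hσ
    rw [mem_coe, mem_filter] at hσ
    have hna : ¬ AvoidsPat p σ := fun hav => by
      have := (nOcc_eq_zero_iff (p := p) hm).mpr hav
      omega
    obtain ⟨-, hfn, -, -⟩ := FB_spec p hna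
    show FB p σ ∈ range (n + 1)
    exact mem_range.mpr (by omega)

lemma card_block_zero (hm : 1 ≤ m) :
    Nat.card {β : Fin 0 → Fin k // ¬ AvoidsPat p β ∧
        ∀ i, OccursAt p β i → 0 ≤ i + m} = 0 := by
  have : IsEmpty {β : Fin 0 → Fin k // ¬ AvoidsPat p β ∧
      ∀ i, OccursAt p β i → 0 ≤ i + m} := by
    refine ⟨fun x => x.2.1 (fun i hoc => ?_)⟩
    obtain ⟨hb, -⟩ := hoc
    omega
  exact Nat.card_of_isEmpty

lemma card_avoid_zero (hm : 1 ≤ m) :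
    Nat.card {σ : Fin 0 → Fin k // AvoidsPat p σ} = 1 := by
  haveI : Unique {σ : Fin 0 → Fin k // AvoidsPat p σ} :=
    { default := ⟨fun a => a.elim0, fun i hoc => by obtain ⟨hb, -⟩ := hoc; omega⟩
      uniq := fun x => Subtype.ext (funext fun a => a.elim0) }
  exact Nat.card_unique

lemma min_of_avoids {n : ℕ} {β : Fin n → Fin k} (hav : AvoidsPat p β) :
    ∀ i, OccursAt p β i → n ≤ i + m := fun i hoc => absurd hoc (hav i)

lemma card_block_succ (hm : 1 ≤ m) (r : ℕ) :
    Nat.card {β : Fin (r + 1) → Fin k // ¬ AvoidsPat p β ∧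
        ∀ i, OccursAt p β i → r + 1 ≤ i + m} +
      Nat.card {β : Fin (r + 1) → Fin k // AvoidsPat p β} =
      k * Nat.card {α : Fin r → Fin k // AvoidsPat p α} := by
  classical
  have e1 : {β : Fin (r + 1) → Fin k // ∀ i, OccursAt p β i → r + 1 ≤ i + m} ≃
      {α : Fin r → Fin k // AvoidsPat p α} × Fin k := by
    refine Equiv.mk
      (fun x => (⟨Fin.init x.1, ?_⟩, x.1 (Fin.last r)))
      (fun y => ⟨Fin.snoc y.1.1 y.2, ?_⟩) ?_ ?_
    · -- init avoids
      intro i hoc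
      obtain ⟨hb, -⟩ := id hoc
      have occB : OccursAt p x.1 i := by
        refine (occursAt_congr (σ := Fin.init x.1) (τ := x.1) hb (by omega)
          (fun a => ?_)).mp hoc
        simp only [Fin.init]
        exact congrArg x.1 (Fin.ext (by simp))
      have := x.2 i occB
      omega
    · -- snoc is Min
      intro i hoc
      by_contra hlt
      obtain ⟨hb, -⟩ := id hoc
      have hble : i + m ≤ r := by omega
      have occA : OccursAt p y.1.1 i := by
        refine (occursAt_congr (σ := Fin.snoc y.1.1 y.2) (τ := y.1.1) hb hble
          (fun a => ?_)).mp hoc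
        have h1 : (⟨i + (a : ℕ), by have := a.isLt; omega⟩ : Fin (r + 1)) =
            Fin.castSucc (⟨i + (a : ℕ), by have := a.isLt; omega⟩ : Fin r) :=
          Fin.ext (by simp)
        rw [h1, Fin.snoc_castSucc]
      exact y.1.2 i occA
    · intro x
      exact Subtype.ext (Fin.snoc_init_self x.1)
    · intro y
      exact Prod.ext (Subtype.ext (by simp)) (by simp)
  have hMcard : Nat.card {β : Fin (r + 1) → Fin k // ∀ i, OccursAt p β i → r + 1 ≤ i + m} =
      k * Nat.card {α : Fin r → Fin k // AvoidsPat p α} := by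
    rw [Nat.card_congr e1, Nat.card_prod, Nat.card_eq_fintype_card (α := Fin k),
      Fintype.card_fin]
    ring
  rw [← hMcard]
  rw [Nat.card_eq_fintype_card, Nat.card_eq_fintype_card, Nat.card_eq_fintype_card,
    Fintype.card_subtype, Fintype.card_subtype, Fintype.card_subtype]
  rw [← Finset.card_filter_add_card_filter_not
    (s := Finset.univ.filter (fun β => ∀ i, OccursAt p β i → r + 1 ≤ i + m))
    (p := fun β => AvoidsPat p β)]
  simp only [Finset.filter_filter]
  have hA : (Finset.univ.filter
        (fun β : Fin (r + 1) → Fin k => (∀ i, OccursAt p β i → r + 1 ≤ i + m) ∧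
          AvoidsPat p β)).card =
      (Finset.univ.filter (fun β : Fin (r + 1) → Fin k => AvoidsPat p β)).card := by
    congr 1
    ext β
    simp only [Finset.mem_filter, Finset.mem_univ, true_and]
    exact ⟨fun h => h.2, fun h => ⟨min_of_avoids p h, h⟩⟩
  have hB : (Finset.univ.filter
        (fun β : Fin (r + 1) → Fin k => (∀ i, OccursAt p β i → r + 1 ≤ i + m) ∧
          ¬ AvoidsPat p β)).card =
      (Finset.univ.filter (fun β : Fin (r + 1) → Fin k => ¬ AvoidsPat p β ∧
          ∀ i, OccursAt p β i → r + 1 ≤ i + m)).card := by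
    congr 1
    ext β
    simp only [Finset.mem_filter, Finset.mem_univ, true_and]
    exact ⟨fun h => ⟨h.2, h.1⟩, fun h => ⟨h.2, h.1⟩⟩
  omega

end Aux

/-- Generating function for the number of `k`-ary words avoiding the subword pattern `p`. -/
noncomputable def Apat {m l : ℕ} (p : Fin m → Fin l) (k : ℕ) : PowerSeries ℚ :=
  PowerSeries.mk fun n => (Nat.card {σ : Fin n → Fin k // AvoidsPat p σ} : ℚ)

namespace Aux

variable {m l : ℕ} (p : Fin m → Fin l) (k : ℕ)

noncomputable def Bser (s : ℕ) : PowerSeries ℚ :=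
  PowerSeries.mk fun n => (Nat.card {σ : Fin n → Fin k // NOcc p σ = s} : ℚ)

noncomputable def Cser : PowerSeries ℚ :=
  PowerSeries.mk fun r => (Nat.card {β : Fin r → Fin k // ¬ AvoidsPat p β ∧
    ∀ i, OccursAt p β i → r ≤ i + m} : ℚ)

lemma Bser_zero (hm : 1 ≤ m) : Bser p k 0 = Apat p k := by
  apply PowerSeries.ext; intro n
  simp only [Bser, Apat, PowerSeries.coeff_mk]
  norm_cast
  exact Nat.card_congr (Equiv.subtypeEquivRight fun σ => nOcc_eq_zero_iff hm)

lemma Bser_succ (hm : 1 ≤ m) (s : ℕ) :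
    Bser p k (s + 1) = Cser p k * Bser p k s := by
  apply PowerSeries.ext; intro n
  rw [Bser, PowerSeries.coeff_mk, PowerSeries.coeff_mul,
    Finset.Nat.sum_antidiagonal_eq_sum_range_succ_mk]
  simp only [Cser, Bser, PowerSeries.coeff_mk]
  rw [card_sum p hm n s]
  push_cast
  rfl

lemma Cser_eq (hm : 1 ≤ m) :
    Cser p k = ((k : PowerSeries ℚ) * PowerSeries.X - 1) * Apat p k + 1 := by
  have hks : ((k : ℕ) : PowerSeries ℚ) = PowerSeries.C (k : ℚ) :=
    (map_natCast (PowerSeries.C) k).symm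
  apply PowerSeries.ext; intro n
  rw [Cser, PowerSeries.coeff_mk]
  have h1 : ((k : PowerSeries ℚ) * PowerSeries.X - 1) * Apat p k + 1
      = PowerSeries.C (k : ℚ) * (PowerSeries.X * Apat p k) - Apat p k + 1 := by
    rw [← hks]; ring
  rw [h1]
  cases n with
  | zero =>
    rw [card_block_zero p hm]
    simp only [map_add, map_sub, PowerSeries.coeff_C_mul, PowerSeries.coeff_one, if_pos rfl]
    have h0 : (PowerSeries.coeff 0) (PowerSeries.X * Apat p k) = 0 := by
      rw [PowerSeries.coeff_zero_eq_constantCoeff, map_mul]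
      simp
    have hA0 : (PowerSeries.coeff 0) (Apat p k) = 1 := by
      rw [Apat, PowerSeries.coeff_mk, card_avoid_zero p hm]
      norm_num
    rw [h0, hA0]
    norm_num
  | succ q =>
    have hq := card_block_succ (p := p) (k := k) hm q
    simp only [map_add, map_sub, PowerSeries.coeff_C_mul, PowerSeries.coeff_one,
      PowerSeries.coeff_succ_X_mul]
    rw [if_neg (Nat.succ_ne_zero q)]
    rw [Apat, PowerSeries.coeff_mk, PowerSeries.coeff_mk]
    have hqq := congrArg (fun x : ℕ => (x : ℚ)) hq
    push_cast at hqq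
    linarith

end Aux

theorem stmt17 (m l : ℕ) (hm : 1 ≤ m) (p : Fin m → Fin l) (k : ℕ) (hk : 1 ≤ k) (s : ℕ) :
    (PowerSeries.mk fun n => (Nat.card {σ : Fin n → Fin k // NOcc p σ = s} : ℚ)) =
      Apat p k * (((k : PowerSeries ℚ) * PowerSeries.X - 1) * Apat p k + 1) ^ s := by
  induction s with
  | zero =>
    rw [pow_zero, mul_one]
    exact Aux.Bser_zero p k hm
  | succ s ih =>
    have h := Aux.Bser_succ p k hm s
    rw [Aux.Cser_eq p k hm] at h
    have ih' : Aux.Bser p k s =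
        Apat p k * (((k : PowerSeries ℚ) * PowerSeries.X - 1) * Apat p k + 1) ^ s := ih
    show Aux.Bser p k (s + 1) = _
    rw [h, ih']
    ring
end

section
/- Let k ≥ 1 and s ≥ 0. For a word σ : Fin n → Fin k let N₁₂(σ) be the maximum number of pairwise non-overlapping occurrences of the pattern 12, i.e., the largest t such that there exist indices i₁ < i₂ < … < i_t with i_j + 2 ≤ i_{j+1} for j < t and σ(i_j) < σ(i_j + 1) for all j. Then in ℚ[[x]]: (1 − x)^{k·(s+1)} · Σ_{n≥0} #{σ : Fin n → Fin k | N₁₂(σ) = s}·xⁿ = ((k·x − 1) + (1 − x)^k)^s. -/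
/-- `σ` has `t` pairwise non-overlapping occurrences of the pattern 12 (ascents at
positions `i₁ < i₂ < ⋯` with `i_j + 2 ≤ i_{j+1}`). -/
def Has12Chain {n k : ℕ} (σ : Fin n → Fin k) (t : ℕ) : Prop :=
  ∃ i : Fin t → ℕ,
    (∀ (j : Fin t) (h : (j : ℕ) + 1 < t), i j + 2 ≤ i ⟨(j : ℕ) + 1, h⟩) ∧
      ∀ j : Fin t, ∃ h : i j + 1 < n,
        σ ⟨i j, Nat.lt_of_succ_lt h⟩ < σ ⟨i j + 1, h⟩

/-- `N₁₂(σ)`: the maximum number of pairwise non-overlapping occurrences of 12 in `σ`. -/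
noncomputable def N12 {n k : ℕ} (σ : Fin n → Fin k) : ℕ :=
  sSup {t : ℕ | Has12Chain σ t}

namespace St19

variable {k : ℕ}

/-- ascent at (natural) position `i`. -/
def Asc {n : ℕ} (σ : Fin n → Fin k) (i : ℕ) : Prop :=
  ∃ h : i + 1 < n, σ ⟨i, Nat.lt_of_succ_lt h⟩ < σ ⟨i + 1, h⟩

lemma chain_le {n : ℕ} {σ : Fin n → Fin k} {t : ℕ} (hc : Has12Chain σ t) : t ≤ n := by
  obtain ⟨i, hgap, hasc⟩ := hc
  rcases Nat.eq_zero_or_pos t with ht | ht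
  · omega
  have key : ∀ j : ℕ, ∀ hj : j < t, j ≤ i ⟨j, hj⟩ := by
    intro j
    induction j with
    | zero => intro _; exact Nat.zero_le _
    | succ j ih =>
      intro hj
      have h1 : j < t := Nat.lt_of_succ_lt hj
      have hg : i ⟨j, h1⟩ + 2 ≤ i ⟨j + 1, hj⟩ := hgap ⟨j, h1⟩ hj
      have := ih h1
      omega
  have hl : t - 1 < t := by omega
  have h1 := key (t - 1) hl
  obtain ⟨h2, -⟩ := hasc ⟨t - 1, hl⟩
  omega

lemma has12chain_zero {n : ℕ} (σ : Fin n → Fin k) : Has12Chain σ 0 :=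
  ⟨fun j => j.elim0, fun j => j.elim0, fun j => j.elim0⟩

lemma bddAbove_chain {n : ℕ} (σ : Fin n → Fin k) : BddAbove {t : ℕ | Has12Chain σ t} :=
  ⟨n, fun _ ht => chain_le ht⟩

lemma has12chain_N12 {n : ℕ} (σ : Fin n → Fin k) : Has12Chain σ (N12 σ) :=
  Nat.sSup_mem ⟨0, by exact has12chain_zero σ⟩ (bddAbove_chain σ)

lemma le_N12 {n : ℕ} {σ : Fin n → Fin k} {t : ℕ} (h : Has12Chain σ t) : t ≤ N12 σ :=
  le_csSup (bddAbove_chain σ) h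

lemma N12_eq_zero_iff {n : ℕ} {σ : Fin n → Fin k} :
    N12 σ = 0 ↔ ∀ i, ¬ Asc σ i := by
  constructor
  · intro h0 i ⟨hi, hlt⟩
    have : Has12Chain σ 1 := by
      refine ⟨fun _ => i, by omega, fun j => ⟨hi, hlt⟩⟩
    have := le_N12 this
    omega
  · intro hno
    by_contra h
    have h1 : 1 ≤ N12 σ := Nat.one_le_iff_ne_zero.2 h
    obtain ⟨i, hgap, hasc⟩ := has12chain_N12 σ
    obtain ⟨hlt, hv⟩ := hasc ⟨0, h1⟩
    exact hno (i ⟨0, h1⟩) ⟨hlt, hv⟩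

/-- suffix of a word starting at position `m`. -/
def suff {n : ℕ} (σ : Fin n → Fin k) (m : ℕ) : Fin (n - m) → Fin k :=
  fun j => σ ⟨m + j, by omega⟩


def glueChain (p : ℕ) (I : ℕ → ℕ) : ℕ → ℕ
  | 0 => p
  | (m + 1) => p + 2 + I m

set_option maxHeartbeats 1000000 in
lemma N12_of_firstAsc {n : ℕ} {σ : Fin n → Fin k} {p : ℕ}
    (hp : Asc σ p) (hmin : ∀ q < p, ¬ Asc σ q) :
    N12 σ = N12 (suff σ (p + 2)) + 1 := by
  obtain ⟨hpn, hplt⟩ := hp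
  apply le_antisymm
  · -- N12 σ ≤ N12 (suff) + 1
    set T := N12 σ with hT
    obtain ⟨i, hgap, hasc⟩ := has12chain_N12 σ
    rcases Nat.eq_zero_or_pos T with h0 | hTpos
    · omega
    -- every chain index is ≥ p
    have hge : ∀ j : Fin T, p ≤ i j := by
      intro j
      by_contra h
      obtain ⟨hj1, hj2⟩ := hasc j
      exact hmin (i j) (by omega) ⟨hj1, hj2⟩
    have hge2 : ∀ j : ℕ, ∀ hj : j < T, 1 ≤ j → p + 2 ≤ i ⟨j, hj⟩ := by
      intro j
      induction j with
      | zero => omega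
      | succ j ih =>
        intro hj _
        have h1 : j < T := Nat.lt_of_succ_lt hj
        have hg : i ⟨j, h1⟩ + 2 ≤ i ⟨j + 1, hj⟩ := hgap ⟨j, h1⟩ hj
        have := hge ⟨j, h1⟩
        omega
    -- chain of length T - 1 in the suffix
    have hchain : Has12Chain (suff σ (p + 2)) (T - 1) := by
      refine ⟨fun j => i ⟨(j : ℕ) + 1, by omega⟩ - (p + 2), ?_, ?_⟩
      · intro j hj
        have h1 : (j : ℕ) + 1 < T := by omega
        have h2 : (j : ℕ) + 1 + 1 < T := by omega
        have hg : i ⟨(j : ℕ) + 1, h1⟩ + 2 ≤ i ⟨(j : ℕ) + 1 + 1, h2⟩ := hgap ⟨(j : ℕ) + 1, h1⟩ h2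
        have e1 := hge2 ((j : ℕ) + 1) h1 (by omega)
        show i ⟨(j : ℕ) + 1, h1⟩ - (p + 2) + 2 ≤ i ⟨(j : ℕ) + 1 + 1, h2⟩ - (p + 2)
        omega
      · intro j
        have h1 : (j : ℕ) + 1 < T := by omega
        obtain ⟨hj1, hj2⟩ := hasc ⟨(j : ℕ) + 1, h1⟩
        have e1 := hge2 ((j : ℕ) + 1) h1 (by omega)
        have hlt : i ⟨(j : ℕ) + 1, h1⟩ - (p + 2) + 1 < n - (p + 2) := by omega
        refine ⟨hlt, ?_⟩
        have ea : (⟨p + 2 + (i ⟨(j : ℕ) + 1, h1⟩ - (p + 2)), by omega⟩ : Fin n)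
            = ⟨i ⟨(j : ℕ) + 1, h1⟩, by omega⟩ := by
          ext; simp; omega
        have eb : (⟨p + 2 + (i ⟨(j : ℕ) + 1, h1⟩ - (p + 2) + 1), by omega⟩ : Fin n)
            = ⟨i ⟨(j : ℕ) + 1, h1⟩ + 1, hj1⟩ := by
          ext; simp; omega
        show σ ⟨p + 2 + (i ⟨(j : ℕ) + 1, h1⟩ - (p + 2)), by omega⟩
            < σ ⟨p + 2 + (i ⟨(j : ℕ) + 1, h1⟩ - (p + 2) + 1), by omega⟩
        exact lt_of_le_of_lt (le_of_eq (congrArg σ ea)) (lt_of_lt_of_le hj2 (le_of_eq (congrArg σ eb).symm))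
    have := le_N12 hchain
    omega
  · -- N12 (suff) + 1 ≤ N12 σ
    set t := N12 (suff σ (p + 2)) with ht
    obtain ⟨i', hgap', hasc'⟩ := has12chain_N12 (suff σ (p + 2))
    rcases Nat.eq_zero_or_pos t with h0 | ht1
    · have hchain : Has12Chain σ 1 :=
        ⟨fun _ => p, by omega, fun j => ⟨hpn, hplt⟩⟩
      have := le_N12 hchain
      omega
    · have hchain : Has12Chain σ (t + 1) := by
        refine ⟨fun j => glueChain p (fun mm => if h : mm < t then i' ⟨mm, h⟩ else 0) (j : ℕ),
          ?_, ?_⟩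
        · intro j hj
          show glueChain p (fun mm => if h : mm < t then i' ⟨mm, h⟩ else 0) (j : ℕ) + 2 ≤
            glueChain p (fun mm => if h : mm < t then i' ⟨mm, h⟩ else 0) ((j : ℕ) + 1)
          obtain ⟨jv, hjv⟩ := j
          simp only at hj ⊢
          rcases jv with _ | m
          · show p + 2 ≤ p + 2 + _
            omega
          · show p + 2 + (if h : m < t then i' ⟨m, h⟩ else 0) + 2 ≤
              p + 2 + (if h : m + 1 < t then i' ⟨m + 1, h⟩ else 0)
            have h1 : m < t := by omega
            have h2 : m + 1 < t := by omega
            rw [dif_pos h1, dif_pos h2]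
            have hg : i' ⟨m, h1⟩ + 2 ≤ i' ⟨m + 1, h2⟩ := hgap' ⟨m, h1⟩ h2
            omega
        · intro j
          obtain ⟨jv, hjv⟩ := j
          rcases jv with _ | m
          · exact ⟨hpn, hplt⟩
          · have h1 : m < t := by omega
            obtain ⟨hj1, hj2⟩ := hasc' ⟨m, h1⟩
            show ∃ h : p + 2 + (if h : m < t then i' ⟨m, h⟩ else 0) + 1 < n,
                σ ⟨p + 2 + (if h : m < t then i' ⟨m, h⟩ else 0), Nat.lt_of_succ_lt h⟩ <
                  σ ⟨p + 2 + (if h : m < t then i' ⟨m, h⟩ else 0) + 1, h⟩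
            simp only [dif_pos h1]
            exact ⟨by omega, hj2⟩
      have := le_N12 hchain
      omega


def pre {n : ℕ} (σ : Fin n → Fin k) (m : ℕ) (hm : m ≤ n) : Fin m → Fin k :=
  fun i => σ ⟨i, by omega⟩

def glue {m n : ℕ} (hm : m ≤ n) (u : Fin m → Fin k) (τ : Fin (n - m) → Fin k) :
    Fin n → Fin k :=
  fun i => if hi : (i : ℕ) < m then u ⟨i, hi⟩ else τ ⟨(i : ℕ) - m, by omega⟩

/-- a word of length `m` which is ascent-free except for an ascent at the final pair. -/
def Valid {m : ℕ} (u : Fin m → Fin k) : Prop :=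
  2 ≤ m ∧ (∀ j < m - 2, ¬ Asc u j) ∧ Asc u (m - 2)

lemma glue_apply_lt {m n : ℕ} (hm : m ≤ n) (u : Fin m → Fin k) (τ : Fin (n - m) → Fin k)
    {a : ℕ} (ha : a < m) (ha' : a < n) : glue hm u τ ⟨a, ha'⟩ = u ⟨a, ha⟩ := by
  unfold glue
  exact dif_pos ha

lemma glue_apply_ge {m n : ℕ} (hm : m ≤ n) (u : Fin m → Fin k) (τ : Fin (n - m) → Fin k)
    {a : ℕ} (ha : m ≤ a) (ha' : a < n) (hb : a - m < n - m) :
    glue hm u τ ⟨a, ha'⟩ = τ ⟨a - m, hb⟩ := by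
  unfold glue
  exact dif_neg (show ¬ a < m by omega)

lemma glue_pre_suff {n : ℕ} (σ : Fin n → Fin k) (m : ℕ) (hm : m ≤ n) :
    glue hm (pre σ m hm) (suff σ m) = σ := by
  funext i
  obtain ⟨a, ha⟩ := i
  by_cases hi : a < m
  · rw [glue_apply_lt hm _ _ hi]
    rfl
  · rw [glue_apply_ge hm _ _ (by omega) _ (by omega)]
    show σ ⟨m + (a - m), by omega⟩ = σ ⟨a, ha⟩
    exact congrArg σ (Fin.ext (show m + (a - m) = a by omega))

lemma pre_glue {m n : ℕ} (hm : m ≤ n) (u : Fin m → Fin k) (τ : Fin (n - m) → Fin k) :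
    pre (glue hm u τ) m hm = u := by
  funext i
  obtain ⟨a, ha⟩ := i
  show glue hm u τ ⟨a, by omega⟩ = u ⟨a, ha⟩
  rw [glue_apply_lt hm u τ ha]

lemma suff_glue {m n : ℕ} (hm : m ≤ n) (u : Fin m → Fin k) (τ : Fin (n - m) → Fin k) :
    suff (glue hm u τ) m = τ := by
  funext j
  obtain ⟨b, hb⟩ := j
  show glue hm u τ ⟨m + b, by omega⟩ = τ ⟨b, hb⟩
  rw [glue_apply_ge hm u τ (by omega) _ (by omega)]
  exact congrArg τ (Fin.ext (show m + b - m = b by omega))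

lemma asc_glue_iff {m n : ℕ} (hm : m ≤ n) (u : Fin m → Fin k) (τ : Fin (n - m) → Fin k)
    {j : ℕ} (hj : j + 1 < m) : Asc (glue hm u τ) j ↔ Asc u j := by
  unfold Asc
  constructor
  · rintro ⟨h, hlt⟩
    rw [glue_apply_lt hm u τ (Nat.lt_of_succ_lt hj), glue_apply_lt hm u τ hj] at hlt
    exact ⟨hj, hlt⟩
  · rintro ⟨h, hlt⟩
    refine ⟨by omega, ?_⟩
    rw [glue_apply_lt hm u τ (Nat.lt_of_succ_lt hj), glue_apply_lt hm u τ hj]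
    exact hlt

lemma asc_pre_iff {n : ℕ} (σ : Fin n → Fin k) (m : ℕ) (hm : m ≤ n)
    {j : ℕ} (hj : j + 1 < m) : Asc (pre σ m hm) j ↔ Asc σ j := by
  unfold Asc pre
  constructor
  · rintro ⟨h, hlt⟩
    exact ⟨by omega, hlt⟩
  · rintro ⟨h, hlt⟩
    exact ⟨hj, hlt⟩


lemma sInf_glue {m n : ℕ} (hm : m ≤ n) (u : Fin m → Fin k) (τ : Fin (n - m) → Fin k)
    (hu : Valid u) : sInf {i | Asc (glue hm u τ) i} = m - 2 := by
  obtain ⟨h2, hno, hasc⟩ := hu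
  have hmem : m - 2 ∈ {i | Asc (glue hm u τ) i} :=
    (asc_glue_iff hm u τ (by omega)).2 hasc
  apply le_antisymm (Nat.sInf_le hmem)
  by_contra hcon
  push_neg at hcon
  have hq : sInf {i | Asc (glue hm u τ) i} ∈ {i | Asc (glue hm u τ) i} :=
    Nat.sInf_mem ⟨m - 2, hmem⟩
  have : Asc u (sInf {i | Asc (glue hm u τ) i}) :=
    (asc_glue_iff hm u τ (by omega)).1 hq
  exact hno _ (by omega) this

lemma valid_pre {n : ℕ} {σ : Fin n → Fin k} (hne : ∃ i, Asc σ i)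
    (hm : sInf {i | Asc σ i} + 2 ≤ n) :
    Valid (pre σ (sInf {i | Asc σ i} + 2) hm) := by
  set p := sInf {i | Asc σ i} with hp
  have hpmem : p ∈ {i | Asc σ i} := Nat.sInf_mem hne
  have hpn : p + 1 < n := hpmem.1
  refine ⟨by omega, ?_, ?_⟩
  · intro j hj
    have hj' : j < p := by omega
    have : j ∉ {i | Asc σ i} := Nat.notMem_of_lt_sInf hj'
    intro hasc
    exact this ((asc_pre_iff σ (p + 2) hm (by omega)).1 hasc)
  · rw [show p + 2 - 2 = p from by omega]
    exact (asc_pre_iff σ (p + 2) hm (by omega)).2 hpmem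

/-- The decomposition of a word at its first ascent, with first ascent ending at
position `m`. -/
def decompEquiv {n : ℕ} (Q : (j : ℕ) → (Fin j → Fin k) → Prop) (m : ℕ) (hm : m ≤ n) :
    {σ : Fin n → Fin k //
        ((∃ i, Asc σ i) ∧ Q (n - (sInf {i | Asc σ i} + 2)) (suff σ (sInf {i | Asc σ i} + 2)))
          ∧ sInf {i | Asc σ i} + 2 = m} ≃
      {u : Fin m → Fin k // Valid u} × {τ : Fin (n - m) → Fin k // Q (n - m) τ} where
  toFun x := by
    refine ⟨⟨pre x.1 m hm, ?_⟩, ⟨suff x.1 m, ?_⟩⟩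
    · obtain ⟨σ, ⟨hne, hQ⟩, hfst⟩ := x
      subst hfst
      exact valid_pre hne hm
    · obtain ⟨σ, ⟨hne, hQ⟩, hfst⟩ := x
      subst hfst
      exact hQ
  invFun y := by
    refine ⟨glue hm y.1.1 y.2.1, ⟨⟨?_, ?_⟩, ?_⟩⟩
    · exact ⟨m - 2, (asc_glue_iff hm y.1.1 y.2.1 (by have := y.1.2.1; omega)).2 y.1.2.2.2⟩
    · rw [sInf_glue hm y.1.1 y.2.1 y.1.2, show m - 2 + 2 = m from by have := y.1.2.1; omega,
        suff_glue]
      exact y.2.2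
    · rw [sInf_glue hm y.1.1 y.2.1 y.1.2]
      have := y.1.2.1
      omega
  left_inv x := by
    obtain ⟨σ, hσ⟩ := x
    exact Subtype.ext (glue_pre_suff σ m hm)
  right_inv y := by
    obtain ⟨⟨u, hu⟩, ⟨τ, hτ⟩⟩ := y
    refine Prod.ext (Subtype.ext ?_) (Subtype.ext ?_)
    · exact pre_glue hm u τ
    · exact suff_glue hm u τ


lemma natCard_sigma {ι : Type*} [Fintype ι] (β : ι → Type*) [∀ i, Finite (β i)] :
    Nat.card (Σ i, β i) = ∑ i, Nat.card (β i) := by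
  letI : ∀ i, Fintype (β i) := fun i => Fintype.ofFinite _
  simp only [Nat.card_eq_fintype_card]
  exact Fintype.card_sigma

lemma card_decomp {n : ℕ} (Q : (j : ℕ) → (Fin j → Fin k) → Prop) :
    Nat.card {σ : Fin n → Fin k //
        (∃ i, Asc σ i) ∧ Q (n - (sInf {i | Asc σ i} + 2)) (suff σ (sInf {i | Asc σ i} + 2))} =
      ∑ m ∈ Finset.range (n + 1),
        Nat.card {u : Fin m → Fin k // Valid u} *
          Nat.card {τ : Fin (n - m) → Fin k // Q (n - m) τ} := by
  set P : (Fin n → Fin k) → Prop := fun σ =>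
    (∃ i, Asc σ i) ∧ Q (n - (sInf {i | Asc σ i} + 2)) (suff σ (sInf {i | Asc σ i} + 2)) with hP
  set q : (Fin n → Fin k) → ℕ := fun σ => sInf {i | Asc σ i} + 2 with hq
  have hqle : ∀ σ : Fin n → Fin k, P σ → q σ ≤ n := by
    intro σ hσ
    have hpmem : sInf {i | Asc σ i} ∈ {i | Asc σ i} := Nat.sInf_mem hσ.1
    have := hpmem.1
    simp only [hq]
    omega
  set fib2 : (Fin n → Fin k) → Fin (n + 1) := fun σ => ⟨min (q σ) n, by omega⟩ with hfib2
  set fib : {σ : Fin n → Fin k // P σ} → Fin (n + 1) := fun x => fib2 x.1 with hfib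
  have e1 : {σ : Fin n → Fin k // P σ} ≃ Σ m : Fin (n + 1), {x : {σ // P σ} // fib x = m} :=
    (Equiv.sigmaFiberEquiv fib).symm
  have e2 : ∀ m : Fin (n + 1), {x : {σ // P σ} // fib x = m} ≃
      {u : Fin (m : ℕ) → Fin k // Valid u} ×
        {τ : Fin (n - (m : ℕ)) → Fin k // Q (n - (m : ℕ)) τ} := by
    intro m
    refine ((Equiv.subtypeSubtypeEquivSubtypeInter P (fun σ => fib2 σ = m)).trans
      (Equiv.subtypeEquivRight ?_)).trans (decompEquiv Q (m : ℕ) (by omega))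
    intro σ
    constructor
    · rintro ⟨hp, hf⟩
      refine ⟨hp, ?_⟩
      have h1 : min (q σ) n = (m : ℕ) := by
        have := congrArg Fin.val hf
        exact this
      have := hqle σ hp
      simp only [hq] at h1 this ⊢
      omega
    · rintro ⟨hp, hf⟩
      refine ⟨hp, ?_⟩
      have := hqle σ hp
      apply Fin.ext
      show min (q σ) n = (m : ℕ)
      simp only [hq] at hf this ⊢
      omega
  calc Nat.card {σ : Fin n → Fin k // P σ}
      = Nat.card (Σ m : Fin (n + 1), {x : {σ // P σ} // fib x = m}) := Nat.card_congr e1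
    _ = ∑ m : Fin (n + 1), Nat.card {x : {σ // P σ} // fib x = m} := natCard_sigma _
    _ = ∑ m : Fin (n + 1), Nat.card {u : Fin (m : ℕ) → Fin k // Valid u} *
          Nat.card {τ : Fin (n - (m : ℕ)) → Fin k // Q (n - (m : ℕ)) τ} := by
        refine Finset.sum_congr rfl fun m _ => ?_
        rw [Nat.card_congr (e2 m), Nat.card_prod]
    _ = ∑ m ∈ Finset.range (n + 1), Nat.card {u : Fin m → Fin k // Valid u} *
          Nat.card {τ : Fin (n - m) → Fin k // Q (n - m) τ} :=
        Fin.sum_univ_eq_sum_range (fun mm => Nat.card {u : Fin mm → Fin k // Valid u} *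
          Nat.card {τ : Fin (n - mm) → Fin k // Q (n - mm) τ}) (n + 1)


lemma noAsc_anti {n : ℕ} {σ : Fin n → Fin k} (h : ∀ i, ¬ Asc σ i) :
    ∀ (a b : Fin n), a ≤ b → σ b ≤ σ a := by
  have key : ∀ (d a : ℕ) (hd : a + d < n), σ ⟨a + d, hd⟩ ≤ σ ⟨a, by omega⟩ := by
    intro d
    induction d with
    | zero => intro a hd; exact le_of_eq (congrArg σ (Fin.ext (show a + 0 = a from rfl)))
    | succ d ih =>
      intro a hd
      have h1 : a + d + 1 < n := by omega
      have h2 : ¬ Asc σ (a + d) := h (a + d)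
      unfold Asc at h2
      push_neg at h2
      have h3 := h2 h1
      calc σ ⟨a + (d + 1), hd⟩ ≤ σ ⟨a + d, by omega⟩ := by
            refine le_trans (le_of_eq (congrArg σ (Fin.ext ?_))) h3
            show a + (d + 1) = a + d + 1
            omega
        _ ≤ σ ⟨a, by omega⟩ := ih a (by omega)
  intro a b hab
  obtain ⟨av, ha⟩ := a
  obtain ⟨bv, hb⟩ := b
  have : bv = av + (bv - av) := by
    simp only [Fin.mk_le_mk] at hab
    omega
  calc σ ⟨bv, hb⟩ = σ ⟨av + (bv - av), by omega⟩ := congrArg σ (Fin.ext this)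
    _ ≤ σ ⟨av, ha⟩ := key _ av _

lemma card_noAsc {n : ℕ} :
    Nat.card {σ : Fin n → Fin k // ∀ i, ¬ Asc σ i} = (k + n - 1).choose n := by
  have hb : Function.Bijective
      (fun σ : {σ : Fin n → Fin k // ∀ i, ¬ Asc σ i} =>
        (⟨↑(List.ofFn σ.1), by simp⟩ : Sym (Fin k) n)) := by
    constructor
    · rintro ⟨σ, hσ⟩ ⟨σ', hσ'⟩ hh
      have hp : List.Perm (List.ofFn σ) (List.ofFn σ') := by
        have := congrArg Subtype.val hh
        simpa [Multiset.coe_eq_coe] using this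
      have hs1 : (List.ofFn σ).Pairwise (· ≥ ·) := by
        rw [List.pairwise_ofFn]
        intro a b hab
        exact noAsc_anti hσ a b (le_of_lt hab)
      have hs2 : (List.ofFn σ').Pairwise (· ≥ ·) := by
        rw [List.pairwise_ofFn]
        intro a b hab
        exact noAsc_anti hσ' a b (le_of_lt hab)
      have := List.Perm.eq_of_pairwise' hs1 hs2 hp
      exact Subtype.ext (List.ofFn_inj.1 this)
    · rintro ⟨ms, hms⟩
      obtain ⟨l, hl, hsort, hlen⟩ :
          ∃ l : List (Fin k), (↑l = ms) ∧ l.Pairwise (· ≤ ·) ∧ l.length = n :=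
        ⟨Multiset.sort ms (· ≤ ·), Multiset.sort_eq _ _, Multiset.pairwise_sort _ _,
          by rw [Multiset.length_sort]; exact hms⟩
      refine ⟨⟨fun i => l.get ⟨n - 1 - (i : ℕ), by have := i.isLt; omega⟩, ?_⟩, ?_⟩
      · rintro i ⟨hi, hlt⟩
        have hkey : ¬ (l.get ⟨n - 1 - i, by omega⟩ < l.get ⟨n - 1 - (i + 1), by omega⟩) := by
          by_cases hc : n - 1 - i = n - 1 - (i + 1)
          · rw [show (⟨n - 1 - i, by omega⟩ : Fin l.length) = ⟨n - 1 - (i + 1), by omega⟩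
              from Fin.ext hc]
            exact lt_irrefl _
          · intro hcon
            have := hsort.rel_get_of_lt
              (show (⟨n - 1 - (i + 1), by omega⟩ : Fin l.length) < ⟨n - 1 - i, by omega⟩
                from by rw [Fin.mk_lt_mk]; omega)
            exact absurd this (not_le.2 hcon)
        exact hkey hlt
      · apply Subtype.ext
        show ↑(List.ofFn fun i : Fin n => l.get ⟨n - 1 - (i : ℕ), by have := i.isLt; omega⟩) = ms
        have hrev : (List.ofFn fun i : Fin n =>
            l.get ⟨n - 1 - (i : ℕ), by have := i.isLt; omega⟩) = l.reverse := by
          apply List.ext_getElem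
          · simp [hlen]
          · intro i h1 h2
            simp only [List.getElem_ofFn, List.getElem_reverse, List.get_eq_getElem]
            congr 1
            omega
        rw [hrev, Multiset.coe_reverse, hl]
  rw [Nat.card_eq_of_bijective _ hb]
  show Nat.card (Sym (Fin k) n) = _
  rw [Nat.card_eq_fintype_card, Sym.card_sym_eq_choose, Fintype.card_fin]


lemma N12_succ_iff {n s : ℕ} {σ : Fin n → Fin k} :
    N12 σ = s + 1 ↔
      (∃ i, Asc σ i) ∧ N12 (suff σ (sInf {i | Asc σ i} + 2)) = s := by
  constructor
  · intro h
    have hne : ∃ i, Asc σ i := by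
      by_contra hno
      push_neg at hno
      have : N12 σ = 0 := N12_eq_zero_iff.2 fun i => hno i
      omega
    have hmem : sInf {i | Asc σ i} ∈ {i | Asc σ i} := Nat.sInf_mem hne
    have hmin : ∀ q < sInf {i | Asc σ i}, ¬ Asc σ q := fun q hq =>
      Nat.notMem_of_lt_sInf hq
    have := N12_of_firstAsc hmem hmin
    exact ⟨hne, by omega⟩
  · rintro ⟨hne, hs⟩
    have hmem : sInf {i | Asc σ i} ∈ {i | Asc σ i} := Nat.sInf_mem hne
    have hmin : ∀ q < sInf {i | Asc σ i}, ¬ Asc σ q := fun q hq =>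
      Nat.notMem_of_lt_sInf hq
    have := N12_of_firstAsc hmem hmin
    omega

section PS

open PowerSeries

variable (k : ℕ)

/-- generating function for words with `N12 = s`. -/
noncomputable def A (s : ℕ) : PowerSeries ℚ :=
  PowerSeries.mk fun n => (Nat.card {σ : Fin n → Fin k // N12 σ = s} : ℚ)

/-- generating function for `Valid` words. -/
noncomputable def Cs : PowerSeries ℚ :=
  PowerSeries.mk fun m => (Nat.card {u : Fin m → Fin k // Valid u} : ℚ)

/-- generating function for ascent-free words. -/
noncomputable def D : PowerSeries ℚ :=
  PowerSeries.mk fun n => (Nat.card {σ : Fin n → Fin k // ∀ i, ¬ Asc σ i} : ℚ)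

/-- generating function for all words. -/
noncomputable def G : PowerSeries ℚ :=
  PowerSeries.mk fun n => ((k : ℚ)) ^ n

lemma one_sub_pow_mul_D (hk : 1 ≤ k) : (1 - X) ^ k * D k = 1 := by
  have hD : D k = PowerSeries.mk fun n => ((k - 1 + n).choose (k - 1) : ℚ) := by
    unfold D
    apply congrArg
    funext n
    rw [card_noAsc]
    congr 1
    rw [← Nat.choose_symm (by omega : k - 1 ≤ k - 1 + n),
      show k - 1 + n - (k - 1) = n from by omega,
      show k + n - 1 = k - 1 + n from by omega]
  rw [hD, mul_comm]
  have := PowerSeries.mk_add_choose_mul_one_sub_pow_eq_one (S := ℚ) (d := k - 1)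
  rw [show k - 1 + 1 = k from by omega] at this
  exact this

lemma A_zero : A k 0 = D k := by
  unfold A D
  apply congrArg
  funext n
  exact congrArg _ (Nat.card_congr (Equiv.subtypeEquivRight fun σ =>
    (N12_eq_zero_iff (σ := σ))))

lemma geom : (1 - (k : PowerSeries ℚ) * X) * G k = 1 := by
  have hkC : (k : PowerSeries ℚ) = PowerSeries.C (R := ℚ) (k : ℚ) :=
    (map_natCast (PowerSeries.C (R := ℚ)) k).symm
  rw [sub_mul, one_mul, hkC, mul_assoc]
  ext n
  rcases n with _ | n
  · simp [G]
  · simp only [map_sub, PowerSeries.coeff_C_mul, PowerSeries.coeff_succ_X_mul]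
    simp [G, pow_succ, mul_comm]

lemma G_decomp : G k = D k + Cs k * G k := by
  ext n
  have hsplit : (k : ℚ) ^ n =
      (Nat.card {σ : Fin n → Fin k // ∀ i, ¬ Asc σ i} : ℚ) +
        (Nat.card {σ : Fin n → Fin k // ∃ i, Asc σ i} : ℚ) := by
    have h1 : Nat.card (Fin n → Fin k) = k ^ n := by
      rw [Nat.card_fun, Nat.card_eq_fintype_card, Nat.card_eq_fintype_card,
        Fintype.card_fin, Fintype.card_fin]
    classical
    have h2 : Nat.card (Fin n → Fin k) =
        Nat.card {σ : Fin n → Fin k // ∃ i, Asc σ i} +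
          Nat.card {σ : Fin n → Fin k // ∀ i, ¬ Asc σ i} := by
      rw [← Nat.card_sum]
      apply Nat.card_congr
      refine (Equiv.sumCompl (fun σ : Fin n → Fin k => ∃ i, Asc σ i)).symm.trans ?_
      refine Equiv.sumCongr (Equiv.refl _) (Equiv.subtypeEquivRight fun σ => ?_)
      push_neg
      rfl
    have hcast : (k : ℚ) ^ n = ((k ^ n : ℕ) : ℚ) := by push_cast; ring
    rw [hcast, ← h1, h2]
    push_cast
    ring
  have hasc : Nat.card {σ : Fin n → Fin k // ∃ i, Asc σ i} =
      ∑ m ∈ Finset.range (n + 1),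
        Nat.card {u : Fin m → Fin k // Valid u} * k ^ (n - m) := by
    have h0 := card_decomp (n := n) (k := k) (fun _ _ => True)
    have e1 : Nat.card {σ : Fin n → Fin k // ∃ i, Asc σ i} =
        Nat.card {σ : Fin n → Fin k // (∃ i, Asc σ i) ∧ True} :=
      Nat.card_congr (Equiv.subtypeEquivRight fun σ => (and_iff_left trivial).symm)
    refine (e1.trans h0).trans (Finset.sum_congr rfl fun m _ => ?_)
    have e2 : Nat.card {τ : Fin (n - m) → Fin k // True} = k ^ (n - m) := by
      rw [Nat.card_congr (Equiv.subtypeUnivEquiv fun τ => trivial), Nat.card_fun,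
        Nat.card_eq_fintype_card, Nat.card_eq_fintype_card, Fintype.card_fin, Fintype.card_fin]
    exact congrArg (fun z => Nat.card {u : Fin m → Fin k // Valid u} * z) e2
  simp only [PowerSeries.coeff_mk, map_add, G, D, Cs, PowerSeries.coeff_mul]
  rw [Finset.Nat.sum_antidiagonal_eq_sum_range_succ_mk]
  simp only [PowerSeries.coeff_mk]
  rw [hsplit, hasc]
  push_cast
  ring

lemma A_succ (s : ℕ) : A k (s + 1) = Cs k * A k s := by
  ext n
  have hcard : Nat.card {σ : Fin n → Fin k // N12 σ = s + 1} =
      ∑ m ∈ Finset.range (n + 1),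
        Nat.card {u : Fin m → Fin k // Valid u} *
          Nat.card {τ : Fin (n - m) → Fin k // N12 τ = s} := by
    have h0 := card_decomp (n := n) (k := k) (fun _ τ => N12 τ = s)
    have e1 : Nat.card {σ : Fin n → Fin k // N12 σ = s + 1} =
        Nat.card {σ : Fin n → Fin k //
          (∃ i, Asc σ i) ∧ N12 (suff σ (sInf {i | Asc σ i} + 2)) = s} :=
      Nat.card_congr (Equiv.subtypeEquivRight fun σ => N12_succ_iff)
    exact e1.trans h0
  simp only [A, Cs, PowerSeries.coeff_mk, PowerSeries.coeff_mul]
  rw [Finset.Nat.sum_antidiagonal_eq_sum_range_succ_mk]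
  simp only [PowerSeries.coeff_mk]
  rw [hcard]
  push_cast
  ring

lemma Cs_eq (hk : 1 ≤ k) :
    (1 - X) ^ k * Cs k = ((k : PowerSeries ℚ) * X - 1) + (1 - X) ^ k := by
  have h1 : (1 : PowerSeries ℚ) = (1 - (k : PowerSeries ℚ) * X) * D k + Cs k := by
    have h2 := congrArg (fun φ => (1 - (k : PowerSeries ℚ) * X) * φ) (G_decomp k)
    simp only [mul_add] at h2
    calc (1 : PowerSeries ℚ) = (1 - (k : PowerSeries ℚ) * X) * G k := (geom k).symm
      _ = (1 - (k : PowerSeries ℚ) * X) * D k + (1 - (k : PowerSeries ℚ) * X) * (Cs k * G k) := h2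
      _ = (1 - (k : PowerSeries ℚ) * X) * D k + Cs k * ((1 - (k : PowerSeries ℚ) * X) * G k) :=
        by ring
      _ = (1 - (k : PowerSeries ℚ) * X) * D k + Cs k := by rw [geom k, mul_one]
  have h3 : Cs k = 1 - (1 - (k : PowerSeries ℚ) * X) * D k := by
    linear_combination -h1
  rw [h3, mul_sub, mul_one]
  have h4 : (1 - X : PowerSeries ℚ) ^ k * ((1 - (k : PowerSeries ℚ) * X) * D k) =
      (1 - (k : PowerSeries ℚ) * X) * ((1 - X) ^ k * D k) := by ring
  rw [h4, one_sub_pow_mul_D k hk, mul_one]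
  ring

lemma main (hk : 1 ≤ k) (s : ℕ) :
    (1 - X) ^ (k * (s + 1)) * A k s =
      (((k : PowerSeries ℚ) * X - 1) + (1 - X) ^ k) ^ s := by
  induction s with
  | zero =>
    rw [show k * (0 + 1) = k from by ring, pow_zero, A_zero]
    exact one_sub_pow_mul_D k hk
  | succ s ih =>
    have e : k * (s + 1 + 1) = k + k * (s + 1) := by ring
    rw [A_succ, e, pow_add, pow_succ]
    calc (1 - X : PowerSeries ℚ) ^ k * (1 - X) ^ (k * (s + 1)) * (Cs k * A k s)
        = ((1 - X) ^ k * Cs k) * ((1 - X) ^ (k * (s + 1)) * A k s) := by ring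
      _ = (((k : PowerSeries ℚ) * X - 1) + (1 - X) ^ k) ^ s *
            (((k : PowerSeries ℚ) * X - 1) + (1 - X) ^ k) := by
          rw [Cs_eq k hk, ih]
          ring

end PS

end St19

theorem stmt19 (k s : ℕ) (hk : 1 ≤ k) :
    (1 - PowerSeries.X) ^ (k * (s + 1)) *
        (PowerSeries.mk fun n => (Nat.card {σ : Fin n → Fin k // N12 σ = s} : ℚ)) =
      (((k : PowerSeries ℚ) * PowerSeries.X - 1) + (1 - PowerSeries.X) ^ k) ^ s :=
  St19.main k hk s
end
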